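/- arXiv:1801.07784 — 8 statements merged into one kernel-verified Lean document; each statement's English description precedes it below -/
import Mathlib

section
/- For every t > 0 and every x ≥ 0 one has ψ(t,x) ≥ 1. Consequently ψ(t, z−c) > 0 for all z ≥ c, the value function U(t,z) = (1/β)·log ψ(t, z−c) is well defined, and U(t,z) ≥ 0 for all t > 0 and z ≥ c. -/
open MeasureTheory Set Real

private lemma gauss_integrable : Integrable (fun y : ℝ => Real.exp (-y ^ 2)) := by
  have := integrable_exp_neg_mul_sq (b := (1:ℝ)) one_pos
  simpa using this

private lemma gauss_Ioi_zero : ∫ y in Ioi (0:ℝ), Real.exp (-y ^ 2) = Real.sqrt Real.pi / 2 := by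
  have := integral_gaussian_Ioi 1
  simpa using this

private lemma interval_eq_Ioi_sub (s : ℝ) :
    ∫ y in (0:ℝ)..s, Real.exp (-y ^ 2) =
      (∫ y in Ioi (0:ℝ), Real.exp (-y ^ 2)) - ∫ y in Ioi s, Real.exp (-y ^ 2) := by
  have h0 := intervalIntegral.integral_Iic_sub_Iic
    (gauss_integrable.integrableOn (s := Iic (0:ℝ))) (gauss_integrable.integrableOn (s := Iic s))
  have h1 := intervalIntegral.integral_Iic_add_Ioi (b := (0:ℝ))
    (gauss_integrable.integrableOn) (gauss_integrable.integrableOn)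
  have h2 := intervalIntegral.integral_Iic_add_Ioi (b := s)
    (gauss_integrable.integrableOn) (gauss_integrable.integrableOn)
  rw [← h0]; linarith

private lemma shift_bound (a b : ℝ) (hb : 0 < b) :
    ∫ y in Ioi a, Real.exp (-y ^ 2) ≤
      Real.exp (b ^ 2 - 2 * a * b) * ∫ y in Ioi (a - b), Real.exp (-y ^ 2) := by
  have hmp : MeasurePreserving (fun u : ℝ => u - b) volume volume := by
    simpa [sub_eq_add_neg] using measurePreserving_add_right (volume : Measure ℝ) (-b)
  have hemb : MeasurableEmbedding (fun u : ℝ => u - b) := by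
    simpa [sub_eq_add_neg] using
      (Homeomorph.addRight (-b)).isClosedEmbedding.measurableEmbedding
  have hpre : (fun u : ℝ => u - b) ⁻¹' (Ioi (a - b)) = Ioi a := by
    ext u; simp [sub_lt_sub_iff_right]
  have hshift : ∫ y in Ioi (a - b), Real.exp (-y ^ 2) =
      ∫ u in Ioi a, Real.exp (-(u - b) ^ 2) := by
    rw [← hmp.setIntegral_preimage_emb hemb (fun y => Real.exp (-y ^ 2)) (Ioi (a - b)), hpre]
  rw [hshift, ← integral_const_mul]
  apply setIntegral_mono_on
  · exact gauss_integrable.integrableOn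
  · exact (((gauss_integrable.comp_sub_right b)).const_mul _).integrableOn
  · exact measurableSet_Ioi
  · intro u hu
    rw [← Real.exp_add]
    apply Real.exp_le_exp.mpr
    have : a < u := hu
    nlinarith
/-- For every t > 0 and every x ≥ 0 one has ψ(t,x) ≥ 1.
Consequently ψ(t, z−c) > 0 for all z ≥ c, the value function
U(t,z) = (1/β)·log ψ(t, z−c) is well defined, and U(t,z) ≥ 0 for all t > 0 and z ≥ c. -/
theorem psi_ge_one
    (σ γ κ c : ℝ) (hσ : 0 < σ) (hγ : 0 < γ) (hκ : 0 < κ)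
    (β : ℝ) (hβ : β = γ ^ 2 / (2 * κ * σ ^ 2))
    (erf : ℝ → ℝ)
    (herf : ∀ x : ℝ, erf x = (2 / Real.sqrt Real.pi) * ∫ y in (0:ℝ)..x, Real.exp (-y ^ 2))
    (ψ : ℝ → ℝ → ℝ)
    (hψ : ∀ t x : ℝ, ψ t x =
      erf (x / (σ * Real.sqrt (2 * t))) +
        Real.exp (-β * x + β ^ 2 * σ ^ 2 * t / 2) *
          (1 - erf (x / (σ * Real.sqrt (2 * t)) - β * σ * Real.sqrt t / Real.sqrt 2))) :
    (∀ t : ℝ, 0 < t → ∀ x : ℝ, 0 ≤ x → 1 ≤ ψ t x) ∧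
      (∀ t : ℝ, 0 < t → ∀ z : ℝ, c ≤ z →
        0 < ψ t (z - c) ∧ 0 ≤ (1 / β) * Real.log (ψ t (z - c))) := by
  have hβpos : 0 < β := by
    rw [hβ]; positivity
  have hπ : (0:ℝ) < Real.sqrt Real.pi := Real.sqrt_pos.mpr Real.pi_pos
  have main : ∀ t : ℝ, 0 < t → ∀ x : ℝ, 0 ≤ x → 1 ≤ ψ t x := by
    intro t ht x hx
    set a : ℝ := x / (σ * Real.sqrt (2 * t)) with ha
    set b : ℝ := β * σ * Real.sqrt t / Real.sqrt 2 with hbdef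
    have hst : (0:ℝ) < Real.sqrt t := Real.sqrt_pos.mpr ht
    have hs2 : (0:ℝ) < Real.sqrt 2 := Real.sqrt_pos.mpr (by norm_num)
    have hb : 0 < b := by positivity
    -- exponent identity
    have hsq2 : Real.sqrt 2 * Real.sqrt 2 = 2 := Real.mul_self_sqrt (by norm_num)
    have hsqt : Real.sqrt t * Real.sqrt t = t := Real.mul_self_sqrt ht.le
    have h2t : Real.sqrt (2 * t) = Real.sqrt 2 * Real.sqrt t := Real.sqrt_mul (by norm_num) t
    have hb2 : b ^ 2 = β ^ 2 * σ ^ 2 * t / 2 := by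
      rw [hbdef, div_pow, mul_pow, mul_pow,
        show (Real.sqrt t) ^ 2 = t from by rw [sq]; exact hsqt,
        show (Real.sqrt 2) ^ 2 = 2 from by rw [sq]; exact hsq2]
    have hab : 2 * (a * b) = β * x := by
      rw [ha, hbdef, h2t]
      field_simp
      linear_combination (-x) * hsq2
    have hexp : -β * x + β ^ 2 * σ ^ 2 * t / 2 = b ^ 2 - 2 * a * b := by
      rw [hb2]; linarith [hab]
    -- erf identities
    have herf' : ∀ s : ℝ, erf s = (2 / Real.sqrt Real.pi) *
        ((Real.sqrt Real.pi / 2) - ∫ y in Ioi s, Real.exp (-y ^ 2)) := by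
      intro s
      rw [herf s, interval_eq_Ioi_sub, gauss_Ioi_zero]
    have hone : ∀ s : ℝ, 1 - erf s = (2 / Real.sqrt Real.pi) * ∫ y in Ioi s, Real.exp (-y ^ 2) := by
      intro s
      rw [herf' s]
      field_simp
      ring
    have key := shift_bound a b hb
    have hψx : ψ t x = erf a + Real.exp (b ^ 2 - 2 * a * b) * (1 - erf (a - b)) := by
      rw [hψ t x, ← hexp, ha, hbdef]
    rw [hψx, herf' a, hone (a - b)]
    have hIa : (0:ℝ) ≤ ∫ y in Ioi a, Real.exp (-y ^ 2) := by
      apply setIntegral_nonneg measurableSet_Ioi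
      intro y _; positivity
    have hfac : (0:ℝ) < 2 / Real.sqrt Real.pi := by positivity
    have hmul := mul_le_mul_of_nonneg_left key hfac.le
    have hid : 2 / Real.sqrt Real.pi * (Real.sqrt Real.pi / 2) = 1 := by
      field_simp
    have e1 : 2 / Real.sqrt Real.pi *
        ((Real.sqrt Real.pi / 2) - ∫ y in Ioi a, Real.exp (-y ^ 2)) =
        1 - 2 / Real.sqrt Real.pi * ∫ y in Ioi a, Real.exp (-y ^ 2) := by
      rw [mul_sub, hid]
    have e2 : Real.exp (b ^ 2 - 2 * a * b) *
        (2 / Real.sqrt Real.pi * ∫ y in Ioi (a - b), Real.exp (-y ^ 2)) =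
        2 / Real.sqrt Real.pi *
          (Real.exp (b ^ 2 - 2 * a * b) * ∫ y in Ioi (a - b), Real.exp (-y ^ 2)) := by
      ring
    rw [e1, e2]
    linarith [hmul]
  refine ⟨main, fun t ht z hz => ?_⟩
  have h1 : 1 ≤ ψ t (z - c) := main t ht (z - c) (by linarith)
  refine ⟨by linarith, ?_⟩
  have hlog : 0 ≤ Real.log (ψ t (z - c)) := Real.log_nonneg h1
  have hβpos : 0 < β := by rw [hβ]; positivity
  positivity
end

section
/- For every t > 0 and x ∈ ℝ, the partial derivative of ψ with respect to t exists at (t,x) and equals ∂_t ψ(t,x) = (βσ/√(2πt))·exp(−x²/(2tσ²)) + (β²σ²/2)·exp(−βx + β²σ²t/2)·(1 − erf((x − βσ²t)/(σ√(2t)))). -/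
/-- For every t > 0 and x ∈ ℝ, the partial derivative of ψ with respect
to t exists at (t,x) and equals
∂_t ψ(t,x) = (βσ/√(2πt))·exp(−x²/(2tσ²))
  + (β²σ²/2)·exp(−βx + β²σ²t/2)·(1 − erf((x − βσ²t)/(σ√(2t)))). -/
theorem psi_deriv_t
    (σ γ κ c : ℝ) (hσ : 0 < σ) (hγ : 0 < γ) (hκ : 0 < κ)
    (β : ℝ) (hβ : β = γ ^ 2 / (2 * κ * σ ^ 2))
    (erf : ℝ → ℝ)
    (herf : ∀ x : ℝ, erf x = (2 / Real.sqrt Real.pi) * ∫ y in (0:ℝ)..x, Real.exp (-y ^ 2))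
    (ψ : ℝ → ℝ → ℝ)
    (hψ : ∀ t x : ℝ, ψ t x =
      erf (x / (σ * Real.sqrt (2 * t))) +
        Real.exp (-β * x + β ^ 2 * σ ^ 2 * t / 2) *
          (1 - erf (x / (σ * Real.sqrt (2 * t)) - β * σ * Real.sqrt t / Real.sqrt 2))) :
    ∀ t : ℝ, 0 < t → ∀ x : ℝ,
      HasDerivAt (fun s => ψ s x)
        (β * σ / Real.sqrt (2 * Real.pi * t) * Real.exp (-x ^ 2 / (2 * t * σ ^ 2)) +
          β ^ 2 * σ ^ 2 / 2 * Real.exp (-β * x + β ^ 2 * σ ^ 2 * t / 2) *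
            (1 - erf ((x - β * σ ^ 2 * t) / (σ * Real.sqrt (2 * t))))) t := by
  intro t ht x
  have hπ : (0:ℝ) < Real.sqrt Real.pi := Real.sqrt_pos.mpr Real.pi_pos
  have ht2 : (0:ℝ) < 2 * t := by linarith
  have hst : 0 < Real.sqrt t := Real.sqrt_pos.mpr ht
  have hs2 : (0:ℝ) < Real.sqrt 2 := by positivity
  have hs2t : Real.sqrt (2 * t) = Real.sqrt 2 * Real.sqrt t := Real.sqrt_mul (by norm_num) t
  have hsq2 : Real.sqrt 2 ^ 2 = 2 := Real.sq_sqrt (by norm_num)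
  have hsqt : Real.sqrt t ^ 2 = t := Real.sq_sqrt ht.le
  have hs2tpos : 0 < Real.sqrt (2 * t) := Real.sqrt_pos.mpr ht2
  -- erf derivative
  have herf' : ∀ u : ℝ, HasDerivAt erf (2 / Real.sqrt Real.pi * Real.exp (-u ^ 2)) u := by
    intro u
    have hc : Continuous fun y : ℝ => Real.exp (-y ^ 2) := by continuity
    have hF : HasDerivAt (fun v : ℝ => ∫ y in (0:ℝ)..v, Real.exp (-y ^ 2))
        (Real.exp (-u ^ 2)) u :=
      intervalIntegral.integral_hasDerivAt_right (hc.intervalIntegrable 0 u)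
        (hc.stronglyMeasurableAtFilter _ _) hc.continuousAt
    have heq : erf = fun v => 2 / Real.sqrt Real.pi * ∫ y in (0:ℝ)..v, Real.exp (-y ^ 2) :=
      funext herf
    rw [heq]
    exact hF.const_mul _
  -- derivative of s ↦ σ * √(2s)
  have h2s : HasDerivAt (fun s : ℝ => 2 * s) 2 t := by
    simpa using (hasDerivAt_id t).const_mul 2
  have hsr : HasDerivAt (fun s : ℝ => Real.sqrt (2 * s)) (1 / (2 * Real.sqrt (2 * t)) * 2) t :=
    (Real.hasDerivAt_sqrt ht2.ne').comp t h2s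
  have hD : HasDerivAt (fun s : ℝ => σ * Real.sqrt (2 * s))
      (σ * (1 / (2 * Real.sqrt (2 * t)) * 2)) t := hsr.const_mul σ
  have hDne : σ * Real.sqrt (2 * t) ≠ 0 := by positivity
  have hg1 : HasDerivAt (fun s : ℝ => x / (σ * Real.sqrt (2 * s)))
      ((0 * (σ * Real.sqrt (2 * t)) - x * (σ * (1 / (2 * Real.sqrt (2 * t)) * 2))) /
        (σ * Real.sqrt (2 * t)) ^ 2) t :=
    (hasDerivAt_const t x).div hD hDne
  have hg2 : HasDerivAt (fun s : ℝ => β * σ * Real.sqrt s / Real.sqrt 2)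
      (β * σ * (1 / (2 * Real.sqrt t)) / Real.sqrt 2) t :=
    ((Real.hasDerivAt_sqrt ht.ne').const_mul (β * σ)).div_const (Real.sqrt 2)
  have hg3 := hg1.sub hg2
  -- exponential
  have hlin : HasDerivAt (fun s : ℝ => -β * x + β ^ 2 * σ ^ 2 * s / 2) (β ^ 2 * σ ^ 2 * 1 / 2) t := by
    exact (((hasDerivAt_id t).const_mul (β ^ 2 * σ ^ 2)).div_const 2).const_add (-β * x)
  have hE := hlin.exp
  -- compose erf
  have hA := (herf' (x / (σ * Real.sqrt (2 * t)))).comp t hg1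
  have hB := (herf' (x / (σ * Real.sqrt (2 * t)) - β * σ * Real.sqrt t / Real.sqrt 2)).comp t hg3
  have hC := (hasDerivAt_const t (1:ℝ)).sub hB
  have hP := hE.mul hC
  have hT := hA.add hP
  simp only [hψ]
  convert hT using 1
  · rfl
  · rfl
  · rfl
  simp only [Pi.sub_apply, Function.comp_apply]
  have h2pit : Real.sqrt (2 * Real.pi * t) = Real.sqrt 2 * Real.sqrt Real.pi * Real.sqrt t := by
    rw [Real.sqrt_mul (by positivity), Real.sqrt_mul (by norm_num)]
  have harg : (x - β * σ ^ 2 * t) / (σ * Real.sqrt (2 * t))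
      = x / (σ * Real.sqrt (2 * t)) - β * σ * Real.sqrt t / Real.sqrt 2 := by
    rw [hs2t]
    field_simp
    ring_nf
    linear_combination (β * σ ^ 2) * hsqt
  rw [harg]
  have hexp1 : -x ^ 2 / (2 * t * σ ^ 2) = -(x / (σ * Real.sqrt (2 * t))) ^ 2 := by
    rw [div_pow, mul_pow, Real.sq_sqrt ht2.le]
    ring
  rw [hexp1]
  have hEv : Real.exp (-β * x + β ^ 2 * σ ^ 2 * t / 2) *
      Real.exp (-(x / (σ * Real.sqrt (2 * t)) - β * σ * Real.sqrt t / Real.sqrt 2) ^ 2)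
      = Real.exp (-(x / (σ * Real.sqrt (2 * t))) ^ 2) := by
    rw [← Real.exp_add]
    congr 1
    rw [hs2t]
    field_simp
    ring_nf
    have p4 : Real.sqrt 2 ^ 4 = 4 := by
      calc Real.sqrt 2 ^ 4 = (Real.sqrt 2 ^ 2) ^ 2 := by ring
        _ = 4 := by rw [hsq2]; norm_num
    have p6 : Real.sqrt 2 ^ 6 = 8 := by
      calc Real.sqrt 2 ^ 6 = (Real.sqrt 2 ^ 2) ^ 3 := by ring
        _ = 8 := by rw [hsq2]; norm_num
    have q4 : Real.sqrt t ^ 4 = t ^ 2 := by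
      calc Real.sqrt t ^ 4 = (Real.sqrt t ^ 2) ^ 2 := by ring
        _ = t ^ 2 := by rw [hsqt]
    have q6 : Real.sqrt t ^ 6 = t ^ 3 := by
      calc Real.sqrt t ^ 6 = (Real.sqrt t ^ 2) ^ 3 := by ring
        _ = t ^ 3 := by rw [hsqt]
    simp only [p4, p6, q4, q6, hsqt, hsq2]
    ring
  rw [hs2t] at hEv ⊢
  rw [h2pit]
  set Y := Real.exp (-β * x + β ^ 2 * σ ^ 2 * t / 2) with hY
  set Z := Real.exp (-(x / (σ * (Real.sqrt 2 * Real.sqrt t)) - β * σ * Real.sqrt t / Real.sqrt 2) ^ 2) with hZ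
  set W := erf (x / (σ * (Real.sqrt 2 * Real.sqrt t)) - β * σ * Real.sqrt t / Real.sqrt 2) with hW
  rw [← hEv]
  field_simp
  ring
end

section
/- The function ψ satisfies the heat equation on (0,∞) × ℝ: for every t > 0 and x ∈ ℝ, ∂_t ψ(t,x) = (σ²/2)·∂_xx ψ(t,x), i.e. the second x-derivative of ψ satisfies ∂_xx ψ(t,x) = (2/σ²)·∂_t ψ(t,x). -/
private lemma erf_hasDerivAt (erf : ℝ → ℝ)
    (herf : ∀ x : ℝ, erf x = (2 / Real.sqrt Real.pi) * ∫ y in (0:ℝ)..x, Real.exp (-y ^ 2))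
    (z : ℝ) : HasDerivAt erf (2 / Real.sqrt Real.pi * Real.exp (-z ^ 2)) z := by
  have he : erf = fun x => (2 / Real.sqrt Real.pi) * ∫ y in (0:ℝ)..x, Real.exp (-y ^ 2) :=
    funext herf
  rw [he]
  have hc : Continuous fun y : ℝ => Real.exp (-y ^ 2) := by fun_prop
  exact ((hc.integral_hasStrictDerivAt 0 z).hasDerivAt).const_mul _

private lemma gauss_hasDerivAt (z : ℝ) :
    HasDerivAt (fun z : ℝ => 2 / Real.sqrt Real.pi * Real.exp (-z ^ 2))
      (2 / Real.sqrt Real.pi * (Real.exp (-z ^ 2) * (-(2 * z)))) z := by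
  have h : HasDerivAt (fun z : ℝ => -z ^ 2) (-(2 * z)) z := by
    simpa [Pi.neg_def] using (hasDerivAt_pow 2 z).neg
  exact h.exp.const_mul _

/-- The function ψ satisfies the heat equation on (0,∞) × ℝ: for every
t > 0 and x ∈ ℝ, ∂_t ψ(t,x) = (σ²/2)·∂_xx ψ(t,x), i.e.
∂_xx ψ(t,x) = (2/σ²)·∂_t ψ(t,x). -/
theorem psi_heat_equation
    (σ γ κ c : ℝ) (hσ : 0 < σ) (hγ : 0 < γ) (hκ : 0 < κ)
    (β : ℝ) (hβ : β = γ ^ 2 / (2 * κ * σ ^ 2))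
    (erf : ℝ → ℝ)
    (herf : ∀ x : ℝ, erf x = (2 / Real.sqrt Real.pi) * ∫ y in (0:ℝ)..x, Real.exp (-y ^ 2))
    (ψ : ℝ → ℝ → ℝ)
    (hψ : ∀ t x : ℝ, ψ t x =
      erf (x / (σ * Real.sqrt (2 * t))) +
        Real.exp (-β * x + β ^ 2 * σ ^ 2 * t / 2) *
          (1 - erf (x / (σ * Real.sqrt (2 * t)) - β * σ * Real.sqrt t / Real.sqrt 2))) :
    ∀ t : ℝ, 0 < t → ∀ x : ℝ,
      deriv (fun s => ψ s x) t = σ ^ 2 / 2 * iteratedDeriv 2 (fun y => ψ t y) x ∧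
        iteratedDeriv 2 (fun y => ψ t y) x = 2 / σ ^ 2 * deriv (fun s => ψ s x) t := by
  intro t ht x
  have hσ' : σ ≠ 0 := hσ.ne'
  have h2t0 : (0:ℝ) < 2 * t := by linarith
  have hs2t : Real.sqrt (2 * t) ≠ 0 := by positivity
  have ha0 : σ * Real.sqrt (2 * t) ≠ 0 := by positivity
  have h2t : Real.sqrt (2 * t) ^ 2 = 2 * t := Real.sq_sqrt h2t0.le
  -- spatial derivatives
  have hud : ∀ y : ℝ, HasDerivAt (fun y : ℝ => y / (σ * Real.sqrt (2 * t)))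
      (1 / (σ * Real.sqrt (2 * t))) y := fun y => (hasDerivAt_id y).div_const _
  have hvd : ∀ y : ℝ, HasDerivAt
      (fun y : ℝ => y / (σ * Real.sqrt (2 * t)) - β * σ * Real.sqrt t / Real.sqrt 2)
      (1 / (σ * Real.sqrt (2 * t))) y := fun y => (hud y).sub_const _
  have hAy : ∀ y : ℝ, HasDerivAt (fun y : ℝ => Real.exp (-β * y + β ^ 2 * σ ^ 2 * t / 2))
      (Real.exp (-β * y + β ^ 2 * σ ^ 2 * t / 2) * (-β)) y := by
    intro y
    have h : HasDerivAt (fun y : ℝ => -β * y + β ^ 2 * σ ^ 2 * t / 2) (-β) y := by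
      simpa using ((hasDerivAt_id y).const_mul (-β)).add_const (β ^ 2 * σ ^ 2 * t / 2)
    exact h.exp
  have herfu : ∀ y : ℝ, HasDerivAt (fun y : ℝ => erf (y / (σ * Real.sqrt (2 * t))))
      (2 / Real.sqrt Real.pi * Real.exp (-(y / (σ * Real.sqrt (2 * t))) ^ 2) *
        (1 / (σ * Real.sqrt (2 * t)))) y :=
    fun y => (erf_hasDerivAt erf herf _).comp y (hud y)
  have herfv : ∀ y : ℝ, HasDerivAt
      (fun y : ℝ => erf (y / (σ * Real.sqrt (2 * t)) - β * σ * Real.sqrt t / Real.sqrt 2))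
      (2 / Real.sqrt Real.pi *
        Real.exp (-(y / (σ * Real.sqrt (2 * t)) - β * σ * Real.sqrt t / Real.sqrt 2) ^ 2) *
        (1 / (σ * Real.sqrt (2 * t)))) y :=
    fun y => (erf_hasDerivAt erf herf _).comp y (hvd y)
  have h1m : ∀ y : ℝ, HasDerivAt
      (fun y : ℝ => 1 - erf (y / (σ * Real.sqrt (2 * t)) - β * σ * Real.sqrt t / Real.sqrt 2))
      (-(2 / Real.sqrt Real.pi *
        Real.exp (-(y / (σ * Real.sqrt (2 * t)) - β * σ * Real.sqrt t / Real.sqrt 2) ^ 2) *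
        (1 / (σ * Real.sqrt (2 * t))))) y := fun y => (herfv y).const_sub 1
  have hF1 : ∀ y : ℝ, HasDerivAt (fun y : ℝ => ψ t y)
      (2 / Real.sqrt Real.pi * Real.exp (-(y / (σ * Real.sqrt (2 * t))) ^ 2) *
          (1 / (σ * Real.sqrt (2 * t))) +
        (Real.exp (-β * y + β ^ 2 * σ ^ 2 * t / 2) * (-β) *
            (1 - erf (y / (σ * Real.sqrt (2 * t)) - β * σ * Real.sqrt t / Real.sqrt 2)) +
          Real.exp (-β * y + β ^ 2 * σ ^ 2 * t / 2) *
            (-(2 / Real.sqrt Real.pi *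
              Real.exp (-(y / (σ * Real.sqrt (2 * t)) - β * σ * Real.sqrt t / Real.sqrt 2) ^ 2) *
              (1 / (σ * Real.sqrt (2 * t))))))) y := by
    intro y
    have hfun : (fun y : ℝ => ψ t y) = fun y : ℝ =>
        erf (y / (σ * Real.sqrt (2 * t))) +
          Real.exp (-β * y + β ^ 2 * σ ^ 2 * t / 2) *
            (1 - erf (y / (σ * Real.sqrt (2 * t)) - β * σ * Real.sqrt t / Real.sqrt 2)) :=
      funext fun y => hψ t y
    rw [hfun]
    exact (herfu y).add ((hAy y).mul (h1m y))
  have hder1 : deriv (fun y : ℝ => ψ t y) = fun y : ℝ =>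
      2 / Real.sqrt Real.pi * Real.exp (-(y / (σ * Real.sqrt (2 * t))) ^ 2) *
          (1 / (σ * Real.sqrt (2 * t))) +
        (Real.exp (-β * y + β ^ 2 * σ ^ 2 * t / 2) * (-β) *
            (1 - erf (y / (σ * Real.sqrt (2 * t)) - β * σ * Real.sqrt t / Real.sqrt 2)) +
          Real.exp (-β * y + β ^ 2 * σ ^ 2 * t / 2) *
            (-(2 / Real.sqrt Real.pi *
              Real.exp (-(y / (σ * Real.sqrt (2 * t)) - β * σ * Real.sqrt t / Real.sqrt 2) ^ 2) *
              (1 / (σ * Real.sqrt (2 * t)))))) := funext fun y => (hF1 y).deriv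
  -- second spatial derivative at x
  have hT1 : HasDerivAt (fun y : ℝ =>
      2 / Real.sqrt Real.pi * Real.exp (-(y / (σ * Real.sqrt (2 * t))) ^ 2) *
        (1 / (σ * Real.sqrt (2 * t))))
      ((2 / Real.sqrt Real.pi * (Real.exp (-(x / (σ * Real.sqrt (2 * t))) ^ 2) *
        (-(2 * (x / (σ * Real.sqrt (2 * t)))))) * (1 / (σ * Real.sqrt (2 * t)))) *
        (1 / (σ * Real.sqrt (2 * t)))) x :=
    ((gauss_hasDerivAt _).comp x (hud x)).mul_const _
  have hT2 : HasDerivAt (fun y : ℝ =>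
      Real.exp (-β * y + β ^ 2 * σ ^ 2 * t / 2) * (-β) *
        (1 - erf (y / (σ * Real.sqrt (2 * t)) - β * σ * Real.sqrt t / Real.sqrt 2)))
      (Real.exp (-β * x + β ^ 2 * σ ^ 2 * t / 2) * (-β) * (-β) *
          (1 - erf (x / (σ * Real.sqrt (2 * t)) - β * σ * Real.sqrt t / Real.sqrt 2)) +
        Real.exp (-β * x + β ^ 2 * σ ^ 2 * t / 2) * (-β) *
          (-(2 / Real.sqrt Real.pi *
            Real.exp (-(x / (σ * Real.sqrt (2 * t)) - β * σ * Real.sqrt t / Real.sqrt 2) ^ 2) *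
            (1 / (σ * Real.sqrt (2 * t)))))) x :=
    ((hAy x).mul_const (-β)).mul (h1m x)
  have hT3 : HasDerivAt (fun y : ℝ =>
      Real.exp (-β * y + β ^ 2 * σ ^ 2 * t / 2) *
        (-(2 / Real.sqrt Real.pi *
          Real.exp (-(y / (σ * Real.sqrt (2 * t)) - β * σ * Real.sqrt t / Real.sqrt 2) ^ 2) *
          (1 / (σ * Real.sqrt (2 * t))))))
      (Real.exp (-β * x + β ^ 2 * σ ^ 2 * t / 2) * (-β) *
          (-(2 / Real.sqrt Real.pi *
            Real.exp (-(x / (σ * Real.sqrt (2 * t)) - β * σ * Real.sqrt t / Real.sqrt 2) ^ 2) *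
            (1 / (σ * Real.sqrt (2 * t))))) +
        Real.exp (-β * x + β ^ 2 * σ ^ 2 * t / 2) *
          (-(2 / Real.sqrt Real.pi *
            (Real.exp (-(x / (σ * Real.sqrt (2 * t)) - β * σ * Real.sqrt t / Real.sqrt 2) ^ 2) *
              (-(2 * (x / (σ * Real.sqrt (2 * t)) - β * σ * Real.sqrt t / Real.sqrt 2)))) *
            (1 / (σ * Real.sqrt (2 * t))) * (1 / (σ * Real.sqrt (2 * t)))))) x :=
    (hAy x).mul ((((gauss_hasDerivAt _).comp x (hvd x)).mul_const _).neg)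
  have h2 := hT1.add (hT2.add hT3)
  -- time derivative
  have hsqt : HasDerivAt (fun s : ℝ => Real.sqrt (2 * s)) (1 / Real.sqrt (2 * t)) t := by
    have h := (Real.hasDerivAt_sqrt h2t0.ne').comp t ((hasDerivAt_id t).const_mul 2)
    refine h.congr_deriv ?_
    ring
  have hUt : HasDerivAt (fun s : ℝ => x / (σ * Real.sqrt (2 * s)))
      (-x / (σ * Real.sqrt (2 * t) * (2 * t))) t := by
    have h := (hasDerivAt_const t x).div (hsqt.const_mul σ) ha0
    refine h.congr_deriv ?_
    rw [mul_pow, h2t]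
    field_simp
    ring
  have hdt : HasDerivAt (fun s : ℝ => β * σ * Real.sqrt s / Real.sqrt 2)
      (β * σ * (1 / (2 * Real.sqrt t)) / Real.sqrt 2) t :=
    ((Real.hasDerivAt_sqrt ht.ne').const_mul (β * σ)).div_const _
  have hVt : HasDerivAt
      (fun s : ℝ => x / (σ * Real.sqrt (2 * s)) - β * σ * Real.sqrt s / Real.sqrt 2)
      (-x / (σ * Real.sqrt (2 * t) * (2 * t)) - β * σ * (1 / (2 * Real.sqrt t)) / Real.sqrt 2)
      t := hUt.sub hdt
  have hkt : HasDerivAt (fun s : ℝ => Real.exp (-β * x + β ^ 2 * σ ^ 2 * s / 2))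
      (Real.exp (-β * x + β ^ 2 * σ ^ 2 * t / 2) * (β ^ 2 * σ ^ 2 / 2)) t := by
    have h : HasDerivAt (fun s : ℝ => -β * x + β ^ 2 * σ ^ 2 * s / 2) (β ^ 2 * σ ^ 2 / 2) t := by
      simpa using (((hasDerivAt_id t).const_mul (β ^ 2 * σ ^ 2)).div_const 2).const_add
        (-β * x)
    exact h.exp
  have hGt : HasDerivAt (fun s : ℝ => ψ s x)
      (2 / Real.sqrt Real.pi * Real.exp (-(x / (σ * Real.sqrt (2 * t))) ^ 2) *
          (-x / (σ * Real.sqrt (2 * t) * (2 * t))) +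
        (Real.exp (-β * x + β ^ 2 * σ ^ 2 * t / 2) * (β ^ 2 * σ ^ 2 / 2) *
            (1 - erf (x / (σ * Real.sqrt (2 * t)) - β * σ * Real.sqrt t / Real.sqrt 2)) +
          Real.exp (-β * x + β ^ 2 * σ ^ 2 * t / 2) *
            (-(2 / Real.sqrt Real.pi *
              Real.exp (-(x / (σ * Real.sqrt (2 * t)) - β * σ * Real.sqrt t / Real.sqrt 2) ^ 2) *
              (-x / (σ * Real.sqrt (2 * t) * (2 * t)) -
                β * σ * (1 / (2 * Real.sqrt t)) / Real.sqrt 2))))) t := by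
    have hfun : (fun s : ℝ => ψ s x) = fun s : ℝ =>
        erf (x / (σ * Real.sqrt (2 * s))) +
          Real.exp (-β * x + β ^ 2 * σ ^ 2 * s / 2) *
            (1 - erf (x / (σ * Real.sqrt (2 * s)) - β * σ * Real.sqrt s / Real.sqrt 2)) :=
      funext fun s => hψ s x
    rw [hfun]
    exact ((erf_hasDerivAt erf herf _).comp t hUt).add
      (hkt.mul (((erf_hasDerivAt erf herf _).comp t hVt).const_sub 1))
  -- assemble
  have h12 : iteratedDeriv 2 (fun y : ℝ => ψ t y) = deriv (deriv (fun y : ℝ => ψ t y)) := by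
    simp only [iteratedDeriv_succ, iteratedDeriv_zero]
  rw [hGt.deriv, h12, hder1]
  erw [h2.deriv]
  have hQ : Real.sqrt 2 ^ 2 = 2 := Real.sq_sqrt (by norm_num)
  have hR : Real.sqrt t ^ 2 = t := Real.sq_sqrt ht.le
  have hS : Real.sqrt (2 * t) = Real.sqrt 2 * Real.sqrt t := Real.sqrt_mul (by norm_num) t
  rw [hS]
  set P := Real.sqrt Real.pi with hP
  set Q := Real.sqrt 2 with hQ'
  set R := Real.sqrt t with hR'
  set A := Real.exp (-β * x + β ^ 2 * σ ^ 2 * t / 2) with hA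
  set E1 := Real.exp (-(x / (σ * (Q * R))) ^ 2) with hE1
  set E2 := Real.exp (-(x / (σ * (Q * R)) - β * σ * R / Q) ^ 2) with hE2
  set W := erf (x / (σ * (Q * R)) - β * σ * R / Q) with hW
  have hP0 : P ≠ 0 := by positivity
  have hQ0 : Q ≠ 0 := by positivity
  have hR0 : R ≠ 0 := by positivity
  have ht0 : t ≠ 0 := ht.ne'
  have e1 : 2 / P * E1 * (-x / (σ * (Q * R) * (2 * t))) =
      σ ^ 2 / 2 * (2 / P * (E1 * -(2 * (x / (σ * (Q * R))))) * (1 / (σ * (Q * R))) *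
        (1 / (σ * (Q * R)))) := by
    field_simp
    linear_combination (-E1*x*R^2) * hQ + (-2*E1*x) * hR
  have e3 : A * -(2 / P * E2 * (-x / (σ * (Q * R) * (2 * t)) - β * σ * (1 / (2 * R)) / Q)) =
      σ ^ 2 / 2 * (A * -β * -(2 / P * E2 * (1 / (σ * (Q * R)))) +
        (A * -β * -(2 / P * E2 * (1 / (σ * (Q * R)))) +
          A * -(2 / P * (E2 * -(2 * (x / (σ * (Q * R)) - β * σ * R / Q))) * (1 / (σ * (Q * R))) *
            (1 / (σ * (Q * R)))))) := by
    field_simp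
    linear_combination (A*E2*R^2*(x - β*σ^2*t)) * hQ +
      (2*A*E2*x) * hR
  have hflip : ∀ a b : ℝ, a = σ ^ 2 / 2 * b → b = 2 / σ ^ 2 * a := by
    intro a b h
    subst h
    field_simp
  exact ⟨by linear_combination e1 + e3, hflip _ _ (by linear_combination e1 + e3)⟩
end

section
/- For every t > 0, the x-derivative of ψ at the boundary point x = 0 satisfies the Robin-type relation ∂_x ψ(t,0) = −β·ψ(t,0). -/
/-- For every t > 0, the x-derivative of ψ at the boundary point x = 0
satisfies the Robin-type relation ∂_x ψ(t,0) = −β·ψ(t,0). -/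
theorem psi_robin_boundary
    (σ γ κ c : ℝ) (hσ : 0 < σ) (hγ : 0 < γ) (hκ : 0 < κ)
    (β : ℝ) (hβ : β = γ ^ 2 / (2 * κ * σ ^ 2))
    (erf : ℝ → ℝ)
    (herf : ∀ x : ℝ, erf x = (2 / Real.sqrt Real.pi) * ∫ y in (0:ℝ)..x, Real.exp (-y ^ 2))
    (ψ : ℝ → ℝ → ℝ)
    (hψ : ∀ t x : ℝ, ψ t x =
      erf (x / (σ * Real.sqrt (2 * t))) +
        Real.exp (-β * x + β ^ 2 * σ ^ 2 * t / 2) *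
          (1 - erf (x / (σ * Real.sqrt (2 * t)) - β * σ * Real.sqrt t / Real.sqrt 2))) :
    ∀ t : ℝ, 0 < t → HasDerivAt (fun y => ψ t y) (-β * ψ t 0) 0 := by
  have hcont : Continuous fun y : ℝ => Real.exp (-y ^ 2) := by continuity
  have hE : ∀ x : ℝ, HasDerivAt (fun u => ∫ y in (0:ℝ)..u, Real.exp (-y ^ 2))
      (Real.exp (-x ^ 2)) x := by
    intro x
    exact intervalIntegral.integral_hasDerivAt_right
      (hcont.intervalIntegrable _ _) (hcont.stronglyMeasurableAtFilter _ _) hcont.continuousAt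
  have herf' : ∀ x : ℝ, HasDerivAt erf (2 / Real.sqrt Real.pi * Real.exp (-x ^ 2)) x := by
    intro x
    have h := (hE x).const_mul (2 / Real.sqrt Real.pi)
    have heq : erf = fun u => (2 / Real.sqrt Real.pi) * ∫ y in (0:ℝ)..u, Real.exp (-y ^ 2) :=
      funext herf
    rw [heq]
    exact h
  have herf0 : erf 0 = 0 := by simp [herf]
  intro t ht
  set s := σ * Real.sqrt (2 * t) with hs
  have hs0 : s ≠ 0 := by
    have h2t : 0 < Real.sqrt (2 * t) := Real.sqrt_pos.2 (by linarith)
    positivity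
  set b := β * σ * Real.sqrt t / Real.sqrt 2 with hb
  set K := β ^ 2 * σ ^ 2 * t / 2 with hK
  have h1 : HasDerivAt (fun x : ℝ => x / s) (1 / s) 0 := by
    simpa using (hasDerivAt_id (0 : ℝ)).div_const s
  have h2 : HasDerivAt (fun x : ℝ => erf (x / s))
      (2 / Real.sqrt Real.pi * Real.exp (-((0:ℝ) / s) ^ 2) * (1 / s)) 0 :=
    (herf' ((0:ℝ) / s)).comp 0 h1
  have h3 : HasDerivAt (fun x : ℝ => x / s - b) (1 / s) 0 := h1.sub_const b
  have h4 : HasDerivAt (fun x : ℝ => erf (x / s - b))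
      (2 / Real.sqrt Real.pi * Real.exp (-((0:ℝ) / s - b) ^ 2) * (1 / s)) 0 :=
    (herf' ((0:ℝ) / s - b)).comp 0 h3
  have h5 : HasDerivAt (fun x : ℝ => Real.exp (-β * x + K))
      (Real.exp (-β * 0 + K) * (-β)) 0 := by
    have hl : HasDerivAt (fun x : ℝ => -β * x + K) (-β) 0 := by
      simpa using ((hasDerivAt_id (0 : ℝ)).const_mul (-β)).add_const K
    exact (Real.hasDerivAt_exp (-β * 0 + K)).comp 0 hl
  have h6 := h5.mul ((hasDerivAt_const (0:ℝ) (1:ℝ)).sub h4)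
  have h7 := h2.add h6
  have hfun : (fun y => ψ t y) =
      fun x : ℝ => erf (x / s) + Real.exp (-β * x + K) * (1 - erf (x / s - b)) :=
    funext fun x => hψ t x
  rw [hfun]
  have hKb : K = b ^ 2 := by
    have ht2 : Real.sqrt t ^ 2 = t := Real.sq_sqrt ht.le
    have h22 : Real.sqrt 2 ^ 2 = 2 := Real.sq_sqrt (by norm_num)
    have h2ne : Real.sqrt 2 ≠ 0 := by positivity
    rw [hK, hb]
    field_simp
    rw [ht2, h22]; ring
  have hexp : Real.exp K * Real.exp (-b ^ 2) = 1 := by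
    rw [← Real.exp_add, hKb]; simp
  refine h7.congr_deriv ?_
  symm
  rw [hψ t 0]
  simp only [zero_div, neg_zero, mul_zero, herf0, Real.exp_zero, zero_sub, zero_add,
    even_two, Even.neg_pow, zero_mul, Pi.sub_apply]
  have h00 : -(0:ℝ) ^ 2 = 0 := by norm_num
  rw [h00, Real.exp_zero]
  linear_combination (2 / Real.sqrt Real.pi * (1 / s)) * hexp
end

section
/- The value function U satisfies the semilinear Hamilton–Jacobi–Bellman partial differential equation ∂_t U(t,z) = (σ²/2)·∂_zz U(t,z) + (γ²/(4κ))·(∂_z U(t,z))² for all t > 0 and all z ≥ c (all partial derivatives existing at every such point). -/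
open MeasureTheory Real Set

lemma contGauss : Continuous fun y : ℝ => Real.exp (-y ^ 2) := by continuity

noncomputable def erf0 (x : ℝ) : ℝ :=
  2 / Real.sqrt Real.pi * ∫ y in (0:ℝ)..x, Real.exp (-y ^ 2)

lemma hasDerivAt_erf0 (x : ℝ) :
    HasDerivAt erf0 (2 / Real.sqrt Real.pi * Real.exp (-x ^ 2)) x := by
  have h : HasDerivAt (fun u => ∫ y in (0:ℝ)..u, Real.exp (-y ^ 2)) (Real.exp (-x ^ 2)) x :=
    intervalIntegral.integral_hasDerivAt_right (contGauss.intervalIntegrable 0 x)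
      (contGauss.stronglyMeasurableAtFilter volume (nhds x)) contGauss.continuousAt
  exact h.const_mul (2 / Real.sqrt Real.pi)

noncomputable def Gf (σ β c t w : ℝ) : ℝ :=
  erf0 ((w - c) / (σ * Real.sqrt (2*t))) +
    Real.exp (-β*(w-c) + β^2*σ^2*t/2) *
      (1 - erf0 ((w-c)/(σ*Real.sqrt (2*t)) - β*σ*Real.sqrt t/Real.sqrt 2))

noncomputable def Gd (σ β c t w : ℝ) : ℝ :=
  -β * (Real.exp (-β*(w-c) + β^2*σ^2*t/2) *
      (1 - erf0 ((w-c)/(σ*Real.sqrt (2*t)) - β*σ*Real.sqrt t/Real.sqrt 2)))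

noncomputable def Gdd (σ β c t w : ℝ) : ℝ :=
  β^2 * (Real.exp (-β*(w-c) + β^2*σ^2*t/2) *
      (1 - erf0 ((w-c)/(σ*Real.sqrt (2*t)) - β*σ*Real.sqrt t/Real.sqrt 2)))
  + β * (2 / Real.sqrt Real.pi * Real.exp (-((w-c)/(σ*Real.sqrt (2*t)))^2)) / (σ*Real.sqrt (2*t))

noncomputable def Td (σ β c t z : ℝ) : ℝ :=
  β^2*σ^2/2 * (Real.exp (-β*(z-c) + β^2*σ^2*t/2) *
      (1 - erf0 ((z-c)/(σ*Real.sqrt (2*t)) - β*σ*Real.sqrt t/Real.sqrt 2)))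
  + (2/Real.sqrt Real.pi * Real.exp (-((z-c)/(σ*Real.sqrt (2*t)))^2)) * (β*σ/(2*Real.sqrt 2*Real.sqrt t))

lemma keyexp (σ β t : ℝ) (hσ : 0 < σ) (ht : 0 < t) (y : ℝ) :
    Real.exp (-β*y + β^2*σ^2*t/2) *
      (2/Real.sqrt Real.pi * Real.exp (-(y/(σ*Real.sqrt (2*t)) - β*σ*Real.sqrt t/Real.sqrt 2)^2))
    = 2/Real.sqrt Real.pi * Real.exp (-(y/(σ*Real.sqrt (2*t)))^2) := by
  have hst : Real.sqrt t ^ 2 = t := Real.sq_sqrt ht.le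
  have hs2 : Real.sqrt 2 ^ 2 = 2 := Real.sq_sqrt (by norm_num)
  have h2t : Real.sqrt (2*t) = Real.sqrt 2 * Real.sqrt t := Real.sqrt_mul (by norm_num) t
  have hstpos : 0 < Real.sqrt t := Real.sqrt_pos.2 ht
  have hs2pos : 0 < Real.sqrt 2 := Real.sqrt_pos.2 (by norm_num)
  rw [h2t, mul_left_comm, ← Real.exp_add]
  congr 2
  field_simp
  ring_nf
  linear_combination (-2*β*σ^2*y*Real.sqrt t^2 + β^2*σ^4*t*Real.sqrt t^2) * hs2 +
    (-2*β^2*σ^4*Real.sqrt t^2) * hst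

lemma hasDerivAt_Gf (σ β c t : ℝ) (hσ : 0 < σ) (ht : 0 < t) (w : ℝ) :
    HasDerivAt (fun w => Gf σ β c t w) (Gd σ β c t w) w := by
  have hk : (0:ℝ) < σ * Real.sqrt (2*t) := by positivity
  have h1 : HasDerivAt (fun w : ℝ => (w - c)/(σ*Real.sqrt (2*t))) (1/(σ*Real.sqrt (2*t))) w :=
    ((hasDerivAt_id w).sub_const c).div_const (σ*Real.sqrt (2*t))
  have h2 : HasDerivAt (fun w : ℝ => erf0 ((w-c)/(σ*Real.sqrt (2*t))))
      (2/Real.sqrt Real.pi * Real.exp (-((w-c)/(σ*Real.sqrt (2*t)))^2) * (1/(σ*Real.sqrt (2*t)))) w :=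
    (hasDerivAt_erf0 _).comp w h1
  have h3 : HasDerivAt (fun w : ℝ => -β*(w-c) + β^2*σ^2*t/2) (-β) w := by
    simpa using (((hasDerivAt_id w).sub_const c).const_mul (-β)).add_const (β^2*σ^2*t/2)
  have h4 := h3.exp
  have h5 : HasDerivAt (fun w : ℝ => (w-c)/(σ*Real.sqrt (2*t)) - β*σ*Real.sqrt t/Real.sqrt 2)
      (1/(σ*Real.sqrt (2*t))) w := h1.sub_const _
  have h6 : HasDerivAt (fun w : ℝ => 1 - erf0 ((w-c)/(σ*Real.sqrt (2*t)) - β*σ*Real.sqrt t/Real.sqrt 2))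
      (-(2/Real.sqrt Real.pi * Real.exp (-((w-c)/(σ*Real.sqrt (2*t)) - β*σ*Real.sqrt t/Real.sqrt 2)^2) * (1/(σ*Real.sqrt (2*t))))) w :=
    ((hasDerivAt_erf0 _).comp w h5).const_sub 1
  have h8 := h2.add (h4.mul h6)
  have hval : (2/Real.sqrt Real.pi * Real.exp (-((w-c)/(σ*Real.sqrt (2*t)))^2) * (1/(σ*Real.sqrt (2*t))))
      + (Real.exp (-β*(w-c) + β^2*σ^2*t/2) * (-β) *
          (1 - erf0 ((w-c)/(σ*Real.sqrt (2*t)) - β*σ*Real.sqrt t/Real.sqrt 2))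
        + Real.exp (-β*(w-c) + β^2*σ^2*t/2) *
          (-(2/Real.sqrt Real.pi * Real.exp (-((w-c)/(σ*Real.sqrt (2*t)) - β*σ*Real.sqrt t/Real.sqrt 2)^2) * (1/(σ*Real.sqrt (2*t))))))
      = Gd σ β c t w := by
    unfold Gd
    linear_combination (-(1:ℝ)/(σ*Real.sqrt (2*t))) * keyexp σ β t hσ ht (w-c)
  rw [hval] at h8
  exact h8

lemma hasDerivAt_Gd' (σ β c t : ℝ) (hσ : 0 < σ) (ht : 0 < t) (w : ℝ) :
    HasDerivAt (fun w => Gd σ β c t w) (Gdd σ β c t w) w := by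
  have hk : (0:ℝ) < σ * Real.sqrt (2*t) := by positivity
  have h1 : HasDerivAt (fun w : ℝ => (w - c)/(σ*Real.sqrt (2*t))) (1/(σ*Real.sqrt (2*t))) w :=
    ((hasDerivAt_id w).sub_const c).div_const (σ*Real.sqrt (2*t))
  have h3 : HasDerivAt (fun w : ℝ => -β*(w-c) + β^2*σ^2*t/2) (-β) w := by
    simpa using (((hasDerivAt_id w).sub_const c).const_mul (-β)).add_const (β^2*σ^2*t/2)
  have h4 := h3.exp
  have h5 : HasDerivAt (fun w : ℝ => (w-c)/(σ*Real.sqrt (2*t)) - β*σ*Real.sqrt t/Real.sqrt 2)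
      (1/(σ*Real.sqrt (2*t))) w := h1.sub_const _
  have h6 : HasDerivAt (fun w : ℝ => 1 - erf0 ((w-c)/(σ*Real.sqrt (2*t)) - β*σ*Real.sqrt t/Real.sqrt 2))
      (-(2/Real.sqrt Real.pi * Real.exp (-((w-c)/(σ*Real.sqrt (2*t)) - β*σ*Real.sqrt t/Real.sqrt 2)^2) * (1/(σ*Real.sqrt (2*t))))) w :=
    ((hasDerivAt_erf0 _).comp w h5).const_sub 1
  have h9 := (h4.mul h6).const_mul (-β)
  have hval : -β * (Real.exp (-β*(w-c) + β^2*σ^2*t/2) * (-β) *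
          (1 - erf0 ((w-c)/(σ*Real.sqrt (2*t)) - β*σ*Real.sqrt t/Real.sqrt 2))
        + Real.exp (-β*(w-c) + β^2*σ^2*t/2) *
          (-(2/Real.sqrt Real.pi * Real.exp (-((w-c)/(σ*Real.sqrt (2*t)) - β*σ*Real.sqrt t/Real.sqrt 2)^2) * (1/(σ*Real.sqrt (2*t))))))
      = Gdd σ β c t w := by
    unfold Gdd
    linear_combination (β/(σ*Real.sqrt (2*t))) * keyexp σ β t hσ ht (w-c)
  rw [hval] at h9
  exact h9

lemma hasDerivAt_T (σ β c t : ℝ) (hσ : 0 < σ) (ht : 0 < t) (z : ℝ) :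
    HasDerivAt (fun s => Gf σ β c s z) (Td σ β c t z) t := by
  have hstp : 0 < Real.sqrt t := Real.sqrt_pos.2 ht
  have hk : (0:ℝ) < σ * Real.sqrt (2*t) := by positivity
  have hq : HasDerivAt (fun s : ℝ => Real.sqrt (2*s)) (1/(2*Real.sqrt (2*t)) * 2) t := by
    have h0 : HasDerivAt (fun s : ℝ => 2*s) 2 t := by simpa using (hasDerivAt_id t).const_mul 2
    exact (Real.hasDerivAt_sqrt (by positivity : (2*t) ≠ 0)).comp t h0
  have hm : HasDerivAt (fun s : ℝ => (z-c)/(σ*Real.sqrt (2*s)))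
      ((0 * (σ*Real.sqrt (2*t)) - (z-c) * (σ * (1/(2*Real.sqrt (2*t)) * 2)))/(σ*Real.sqrt (2*t))^2) t :=
    (hasDerivAt_const t (z-c)).div (hq.const_mul σ) (ne_of_gt hk)
  have he1 : HasDerivAt (fun s : ℝ => erf0 ((z-c)/(σ*Real.sqrt (2*s))))
      (2/Real.sqrt Real.pi * Real.exp (-((z-c)/(σ*Real.sqrt (2*t)))^2) *
        ((0 * (σ*Real.sqrt (2*t)) - (z-c) * (σ * (1/(2*Real.sqrt (2*t)) * 2)))/(σ*Real.sqrt (2*t))^2)) t :=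
    (hasDerivAt_erf0 _).comp t hm
  have hA : HasDerivAt (fun s : ℝ => Real.exp (-β*(z-c) + β^2*σ^2*s/2))
      (Real.exp (-β*(z-c) + β^2*σ^2*t/2) * (β^2*σ^2*1/2)) t := by
    have h0 : HasDerivAt (fun s : ℝ => -β*(z-c) + β^2*σ^2*s/2) (β^2*σ^2*1/2) t :=
      (((hasDerivAt_id t).const_mul (β^2*σ^2)).div_const 2).const_add (-β*(z-c))
    exact h0.exp
  have hr : HasDerivAt (fun s : ℝ => β*σ*Real.sqrt s/Real.sqrt 2)
      (β*σ*(1/(2*Real.sqrt t))/Real.sqrt 2) t :=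
    ((Real.hasDerivAt_sqrt ht.ne').const_mul (β*σ)).div_const (Real.sqrt 2)
  have hv := hm.sub hr
  have he2 : HasDerivAt (fun s : ℝ => erf0 ((z-c)/(σ*Real.sqrt (2*s)) - β*σ*Real.sqrt s/Real.sqrt 2))
      (2/Real.sqrt Real.pi * Real.exp (-((z-c)/(σ*Real.sqrt (2*t)) - β*σ*Real.sqrt t/Real.sqrt 2)^2) *
        ((0 * (σ*Real.sqrt (2*t)) - (z-c) * (σ * (1/(2*Real.sqrt (2*t)) * 2)))/(σ*Real.sqrt (2*t))^2
          - β*σ*(1/(2*Real.sqrt t))/Real.sqrt 2)) t :=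
    (hasDerivAt_erf0 _).comp t hv
  have hB := he2.const_sub 1
  have htot := he1.add (hA.mul hB)
  have hval : (2/Real.sqrt Real.pi * Real.exp (-((z-c)/(σ*Real.sqrt (2*t)))^2) *
        ((0 * (σ*Real.sqrt (2*t)) - (z-c) * (σ * (1/(2*Real.sqrt (2*t)) * 2)))/(σ*Real.sqrt (2*t))^2))
      + (Real.exp (-β*(z-c) + β^2*σ^2*t/2) * (β^2*σ^2*1/2) *
          (1 - erf0 ((z-c)/(σ*Real.sqrt (2*t)) - β*σ*Real.sqrt t/Real.sqrt 2))
        + Real.exp (-β*(z-c) + β^2*σ^2*t/2) *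
          (-(2/Real.sqrt Real.pi * Real.exp (-((z-c)/(σ*Real.sqrt (2*t)) - β*σ*Real.sqrt t/Real.sqrt 2)^2) *
            ((0 * (σ*Real.sqrt (2*t)) - (z-c) * (σ * (1/(2*Real.sqrt (2*t)) * 2)))/(σ*Real.sqrt (2*t))^2
              - β*σ*(1/(2*Real.sqrt t))/Real.sqrt 2))))
      = Td σ β c t z := by
    unfold Td
    linear_combination ((β*σ*(1/(2*Real.sqrt t))/Real.sqrt 2) -
      ((0 * (σ*Real.sqrt (2*t)) - (z-c) * (σ * (1/(2*Real.sqrt (2*t)) * 2)))/(σ*Real.sqrt (2*t))^2)) *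
      keyexp σ β t hσ ht (z-c)
  rw [hval] at htot
  exact htot
lemma erf0_nonneg {x : ℝ} (hx : 0 ≤ x) : 0 ≤ erf0 x := by
  have h1 : 0 ≤ ∫ y in (0:ℝ)..x, Real.exp (-y ^ 2) :=
    intervalIntegral.integral_nonneg hx (fun y _ => (Real.exp_pos _).le)
  have h2 : (0:ℝ) ≤ 2 / Real.sqrt Real.pi := by positivity
  exact mul_nonneg h2 h1

lemma erf0_lt_one (x : ℝ) : erf0 x < 1 := by
  have hπ : 0 < Real.sqrt Real.pi := Real.sqrt_pos.2 Real.pi_pos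
  have hIoi : IntegrableOn (fun y : ℝ => Real.exp (-y ^ 2)) (Ioi 0) volume := by
    have := (integrable_exp_neg_mul_sq (b := 1) one_pos).integrableOn (s := Ioi 0)
    simpa using this
  have hval : ∫ y in Ioi (0:ℝ), Real.exp (-y ^ 2) = Real.sqrt Real.pi / 2 := by
    have := integral_gaussian_Ioi 1
    simpa using this
  have hint : ∫ y in (0:ℝ)..x, Real.exp (-y ^ 2) < Real.sqrt Real.pi / 2 := by
    rcases le_or_gt x 0 with hx | hx
    · have h1 : ∫ y in (0:ℝ)..x, Real.exp (-y ^ 2) ≤ 0 := by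
        rw [intervalIntegral.integral_symm]
        have : 0 ≤ ∫ y in x..(0:ℝ), Real.exp (-y ^ 2) :=
          intervalIntegral.integral_nonneg hx (fun y _ => (Real.exp_pos _).le)
        linarith
      have : 0 < Real.sqrt Real.pi / 2 := by positivity
      linarith
    · have hsplit : (Ioc (0:ℝ) x) ∪ (Ioi x) = Ioi 0 := Set.Ioc_union_Ioi_eq_Ioi hx.le
      have hdisj : Disjoint (Ioc (0:ℝ) x) (Ioi x) := Set.Ioc_disjoint_Ioi le_rfl
      have hsum : (∫ y in Ioc (0:ℝ) x, Real.exp (-y ^ 2)) + ∫ y in Ioi x, Real.exp (-y ^ 2)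
          = Real.sqrt Real.pi / 2 := by
        rw [← hval, ← hsplit, setIntegral_union hdisj measurableSet_Ioi
          (hIoi.mono_set (by rw [← hsplit]; exact subset_union_left))
          (hIoi.mono_set (by rw [← hsplit]; exact subset_union_right))]
      have htail : 0 < ∫ y in Ioi x, Real.exp (-y ^ 2) := by
        rw [setIntegral_pos_iff_support_of_nonneg_ae
          (Filter.Eventually.of_forall fun y => (Real.exp_pos _).le)
          (hIoi.mono_set (by rw [← hsplit]; exact subset_union_right))]
        have hsupp : Function.support (fun y : ℝ => Real.exp (-y ^ 2)) = univ := by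
          ext y; simp [Function.support, Real.exp_ne_zero]
        rw [hsupp, univ_inter, Real.volume_Ioi]
        simp
      rw [intervalIntegral.integral_of_le hx.le]
      linarith
  calc erf0 x = 2 / Real.sqrt Real.pi * ∫ y in (0:ℝ)..x, Real.exp (-y ^ 2) := rfl
    _ < 2 / Real.sqrt Real.pi * (Real.sqrt Real.pi / 2) := by
        exact mul_lt_mul_of_pos_left hint (by positivity)
    _ = 1 := by field_simp

lemma Gf_pos (σ β c t : ℝ) (hσ : 0 < σ) (ht : 0 < t) {w : ℝ} (hw : c ≤ w) :
    0 < Gf σ β c t w := by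
  unfold Gf
  have h1 : 0 ≤ erf0 ((w-c)/(σ*Real.sqrt (2*t))) :=
    erf0_nonneg (div_nonneg (by linarith) (by positivity))
  have h2 : 0 < 1 - erf0 ((w-c)/(σ*Real.sqrt (2*t)) - β*σ*Real.sqrt t/Real.sqrt 2) :=
    sub_pos.2 (erf0_lt_one _)
  have := Real.exp_pos (-β*(w-c) + β^2*σ^2*t/2)
  nlinarith

lemma heat_eq (σ β c t : ℝ) (hσ : 0 < σ) (ht : 0 < t) (z : ℝ) :
    Td σ β c t z = σ^2/2 * Gdd σ β c t z := by
  unfold Td Gdd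
  have h2t : Real.sqrt (2*t) = Real.sqrt 2 * Real.sqrt t := Real.sqrt_mul (by norm_num) t
  have hstp : 0 < Real.sqrt t := Real.sqrt_pos.2 ht
  have hs2p : 0 < Real.sqrt 2 := Real.sqrt_pos.2 (by norm_num)
  rw [h2t]
  field_simp


/-- The value function U satisfies the semilinear HJB equation
∂_t U(t,z) = (σ²/2)·∂_zz U(t,z) + (γ²/(4κ))·(∂_z U(t,z))² for all t > 0 and all
z ≥ c (all partial derivatives existing at every such point). -/
theorem U_HJB_equation
    (σ γ κ c : ℝ) (hσ : 0 < σ) (hγ : 0 < γ) (hκ : 0 < κ)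
    (β : ℝ) (hβ : β = γ ^ 2 / (2 * κ * σ ^ 2))
    (erf : ℝ → ℝ)
    (herf : ∀ x : ℝ, erf x = (2 / Real.sqrt Real.pi) * ∫ y in (0:ℝ)..x, Real.exp (-y ^ 2))
    (ψ : ℝ → ℝ → ℝ)
    (hψ : ∀ t x : ℝ, ψ t x =
      erf (x / (σ * Real.sqrt (2 * t))) +
        Real.exp (-β * x + β ^ 2 * σ ^ 2 * t / 2) *
          (1 - erf (x / (σ * Real.sqrt (2 * t)) - β * σ * Real.sqrt t / Real.sqrt 2)))
    (U : ℝ → ℝ → ℝ)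
    (hU : ∀ t z : ℝ, U t z = (1 / β) * Real.log (ψ t (z - c))) :
    ∀ t : ℝ, 0 < t → ∀ z : ℝ, c ≤ z →
      ∃ ut uz uzz : ℝ,
        HasDerivAt (fun s => U s z) ut t ∧
        HasDerivAt (fun w => U t w) uz z ∧
        HasDerivAt (deriv (fun w => U t w)) uzz z ∧
        ut = σ ^ 2 / 2 * uzz + γ ^ 2 / (4 * κ) * uz ^ 2 := by
  intro t ht z hz
  have hβpos : 0 < β := by rw [hβ]; positivity
  have hβne : β ≠ 0 := ne_of_gt hβpos
  have hGψ : ∀ s w : ℝ, ψ s (w - c) = Gf σ β c s w := by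
    intro s w
    rw [hψ]
    simp only [Gf, herf, erf0]
  have hUw : (fun w => U t w) = fun w => (1/β) * Real.log (Gf σ β c t w) := by
    funext w; rw [hU, hGψ]
  have hUs : (fun s => U s z) = fun s => (1/β) * Real.log (Gf σ β c s z) := by
    funext s; rw [hU, hGψ]
  have hS : 0 < Gf σ β c t z := Gf_pos σ β c t hσ ht hz
  have hSne : Gf σ β c t z ≠ 0 := ne_of_gt hS
  have hUz : HasDerivAt (fun w => U t w) ((1/β) * (Gd σ β c t z / Gf σ β c t z)) z := by
    rw [hUw]
    exact ((hasDerivAt_Gf σ β c t hσ ht z).log hSne).const_mul (1/β)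
  have hUt : HasDerivAt (fun s => U s z) ((1/β) * (Td σ β c t z / Gf σ β c t z)) t := by
    rw [hUs]
    exact ((hasDerivAt_T σ β c t hσ ht z).log hSne).const_mul (1/β)
  have hev : ∀ᶠ w in nhds z, 0 < Gf σ β c t w :=
    ((hasDerivAt_Gf σ β c t hσ ht z).continuousAt).eventually (eventually_gt_nhds hS)
  have hderiv_eq : deriv (fun w => U t w) =ᶠ[nhds z]
      fun w => (1/β) * (Gd σ β c t w / Gf σ β c t w) := by
    filter_upwards [hev] with w hw
    rw [hUw]
    exact (((hasDerivAt_Gf σ β c t hσ ht w).log (ne_of_gt hw)).const_mul (1/β)).deriv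
  have hF : HasDerivAt (fun w => (1/β) * (Gd σ β c t w / Gf σ β c t w))
      ((1/β) * ((Gdd σ β c t z * Gf σ β c t z - Gd σ β c t z * Gd σ β c t z) / Gf σ β c t z ^ 2)) z :=
    (((hasDerivAt_Gd' σ β c t hσ ht z).div (hasDerivAt_Gf σ β c t hσ ht z) hSne).const_mul (1/β))
  have hUzz : HasDerivAt (deriv (fun w => U t w))
      ((1/β) * ((Gdd σ β c t z * Gf σ β c t z - Gd σ β c t z * Gd σ β c t z) / Gf σ β c t z ^ 2)) z :=
    hF.congr_of_eventuallyEq hderiv_eq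
  refine ⟨_, _, _, hUt, hUz, hUzz, ?_⟩
  rw [heat_eq σ β c t hσ ht z]
  have hγ2 : γ^2/(4*κ) = β * σ^2/2 := by
    rw [hβ]; field_simp; ring
  rw [hγ2]
  field_simp
  ring
end

section
/- The value function U satisfies the boundary condition ∂_z U(t,c) = −1 for every t > 0, where ∂_z U denotes the partial derivative of U with respect to its second argument. -/
/-- The value function U satisfies the boundary condition
∂_z U(t,c) = −1 for every t > 0, where ∂_z U denotes the partial derivative of U
with respect to its second argument. -/
theorem U_boundary_condition
    (σ γ κ c : ℝ) (hσ : 0 < σ) (hγ : 0 < γ) (hκ : 0 < κ)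
    (β : ℝ) (hβ : β = γ ^ 2 / (2 * κ * σ ^ 2))
    (erf : ℝ → ℝ)
    (herf : ∀ x : ℝ, erf x = (2 / Real.sqrt Real.pi) * ∫ y in (0:ℝ)..x, Real.exp (-y ^ 2))
    (ψ : ℝ → ℝ → ℝ)
    (hψ : ∀ t x : ℝ, ψ t x =
      erf (x / (σ * Real.sqrt (2 * t))) +
        Real.exp (-β * x + β ^ 2 * σ ^ 2 * t / 2) *
          (1 - erf (x / (σ * Real.sqrt (2 * t)) - β * σ * Real.sqrt t / Real.sqrt 2)))
    (U : ℝ → ℝ → ℝ)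
    (hU : ∀ t z : ℝ, U t z = (1 / β) * Real.log (ψ t (z - c))) :
    ∀ t : ℝ, 0 < t → HasDerivAt (fun z => U t z) (-1) c := by
  intro t ht
  have hβ0 : 0 < β := by rw [hβ]; positivity
  have hψt := hψ t
  have erf_deriv : ∀ x : ℝ, HasDerivAt erf (2 / Real.sqrt Real.pi * Real.exp (-x ^ 2)) x := by
    intro x
    have hcont : Continuous fun y : ℝ => Real.exp (-y ^ 2) := by continuity
    have h1 : HasDerivAt (fun u : ℝ => ∫ y in (0:ℝ)..u, Real.exp (-y ^ 2))
        (Real.exp (-x ^ 2)) x :=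
      intervalIntegral.integral_hasDerivAt_right (hcont.intervalIntegrable 0 x)
        (hcont.stronglyMeasurableAtFilter _ _) hcont.continuousAt
    have h2 := h1.const_mul (2 / Real.sqrt Real.pi)
    rw [show erf = fun x : ℝ => (2 / Real.sqrt Real.pi) * ∫ y in (0:ℝ)..x, Real.exp (-y ^ 2)
      from funext herf]
    exact h2
  have erf0 : erf 0 = 0 := by rw [herf]; simp
  set s := σ * Real.sqrt (2 * t) with hs_def
  set a := β * σ * Real.sqrt t / Real.sqrt 2 with ha_def
  set K := β ^ 2 * σ ^ 2 * t / 2 with hK_def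
  have hs : 0 < s := by
    have : 0 < Real.sqrt (2 * t) := Real.sqrt_pos.mpr (by linarith)
    positivity
  set F : ℝ → ℝ := fun x => erf (x / s) + Real.exp (-β * x + K) * (1 - erf (x / s - a)) with hFdef
  have hψF : ∀ x : ℝ, ψ t x = F x := fun x => by rw [hψt x]
  have ha2 : a ^ 2 = K := by
    rw [ha_def, hK_def, div_pow, mul_pow, mul_pow, Real.sq_sqrt ht.le,
      Real.sq_sqrt (by norm_num : (0:ℝ) ≤ 2)]
    try ring
  have hEE : Real.exp K * Real.exp (-(a ^ 2)) = 1 := by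
    rw [ha2, ← Real.exp_add]
    try simp
  have ha_nonneg : 0 ≤ a := by
    have := Real.sqrt_nonneg t
    have h2 : 0 < Real.sqrt 2 := Real.sqrt_pos.mpr (by norm_num)
    positivity
  have herfneg : erf (-a) ≤ 0 := by
    rw [herf]
    have h0 : (0:ℝ) ≤ ∫ y in (-a)..(0:ℝ), Real.exp (-y ^ 2) :=
      intervalIntegral.integral_nonneg (by linarith) (fun y _ => (Real.exp_pos _).le)
    have hsym : (∫ y in (0:ℝ)..(-a), Real.exp (-y ^ 2))
        = -∫ y in (-a)..(0:ℝ), Real.exp (-y ^ 2) := intervalIntegral.integral_symm _ _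
    have hpi : 0 < Real.sqrt Real.pi := Real.sqrt_pos.mpr Real.pi_pos
    rw [hsym]
    have h2 : (0:ℝ) ≤ 2 / Real.sqrt Real.pi := by positivity
    nlinarith
  have hF0 : F 0 = Real.exp K * (1 - erf (-a)) := by
    simp [hFdef, erf0]
  have hF0pos : 0 < F 0 := by
    rw [hF0]; exact mul_pos (Real.exp_pos _) (by linarith)
  -- derivative of F at 0
  have hinner : HasDerivAt (fun x : ℝ => x / s) (1 / s) 0 := (hasDerivAt_id 0).div_const s
  have h1 : HasDerivAt (fun x : ℝ => erf (x / s))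
      (2 / Real.sqrt Real.pi * Real.exp (-(0 / s) ^ 2) * (1 / s)) 0 :=
    (erf_deriv (0 / s)).comp 0 hinner
  have hlin : HasDerivAt (fun x : ℝ => -β * x + K) (-β) 0 := by
    simpa using ((hasDerivAt_id (0:ℝ)).const_mul (-β)).add_const K
  have hexp : HasDerivAt (fun x : ℝ => Real.exp (-β * x + K))
      (Real.exp (-β * 0 + K) * (-β)) 0 :=
    hlin.exp
  have hinner2 : HasDerivAt (fun x : ℝ => x / s - a) (1 / s) 0 := hinner.sub_const a
  have h3 : HasDerivAt (fun x : ℝ => 1 - erf (x / s - a))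
      (-(2 / Real.sqrt Real.pi * Real.exp (-(0 / s - a) ^ 2) * (1 / s))) 0 := by
    have := ((erf_deriv (0 / s - a)).comp 0 hinner2).const_sub 1
    simpa using this
  have hF' := h1.add (hexp.mul h3)
  have hF2 : HasDerivAt F (-β * (Real.exp K * (1 - erf (-a)))) 0 := by
    convert hF' using 1
    any_goals rfl
    simp only [zero_div, ne_eq, OfNat.ofNat_ne_zero, not_false_eq_true, zero_pow, neg_zero,
      Real.exp_zero, mul_one, mul_zero, zero_add, zero_sub, neg_sq]
    linear_combination (2 / Real.sqrt Real.pi * (1 / s)) * hEE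
  have hF2c : HasDerivAt F (-β * (Real.exp K * (1 - erf (-a)))) (c - c) := by
    rwa [sub_self]
  have hG : HasDerivAt (fun z : ℝ => F (z - c))
      (-β * (Real.exp K * (1 - erf (-a)))) c := hF2c.comp_sub_const c c
  have hFcc : F (c - c) ≠ 0 := by rw [sub_self]; exact hF0pos.ne'
  have hlog : HasDerivAt (fun z : ℝ => Real.log (F (z - c)))
      (-β * (Real.exp K * (1 - erf (-a))) / F (c - c)) c := hG.log hFcc
  have hfinal := hlog.const_mul (1 / β)
  have hfun : (fun z : ℝ => U t z) = fun z : ℝ => (1 / β) * Real.log (F (z - c)) := by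
    funext z; rw [hU t z, hψF (z - c)]
  rw [hfun]
  convert hfinal using 1
  any_goals rfl
  rw [sub_self, hF0]
  have hne : Real.exp K * (1 - erf (-a)) ≠ 0 := by rw [← hF0]; exact hF0pos.ne'
  field_simp
  rw [div_self (by linarith : 0 < 1 - erf (-a)).ne']
end

section
/- The optimal trading strategy v*(t,z) = (γ/(2κ))·∂_z U(T−t, z) of the speculative trader is a selling strategy with bounded rate: for every t ∈ [0,T) and every z ≥ c one has −γ/(2κ) ≤ v*(t,z) ≤ 0. -/
open MeasureTheory

/-- The optimal trading strategy v*(t,z) = (γ/(2κ))·∂_z U(T−t, z) of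
the speculative trader is a selling strategy with bounded rate: for every t ∈ [0,T)
and every z ≥ c one has −γ/(2κ) ≤ v*(t,z) ≤ 0. -/
theorem optimal_strategy_bounds
    (σ γ κ c : ℝ) (hσ : 0 < σ) (hγ : 0 < γ) (hκ : 0 < κ)
    (β : ℝ) (hβ : β = γ ^ 2 / (2 * κ * σ ^ 2))
    (erf : ℝ → ℝ)
    (herf : ∀ x : ℝ, erf x = (2 / Real.sqrt Real.pi) * ∫ y in (0:ℝ)..x, Real.exp (-y ^ 2))
    (ψ : ℝ → ℝ → ℝ)
    (hψ : ∀ t x : ℝ, ψ t x =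
      erf (x / (σ * Real.sqrt (2 * t))) +
        Real.exp (-β * x + β ^ 2 * σ ^ 2 * t / 2) *
          (1 - erf (x / (σ * Real.sqrt (2 * t)) - β * σ * Real.sqrt t / Real.sqrt 2)))
    (U : ℝ → ℝ → ℝ)
    (hU : ∀ t z : ℝ, U t z = (1 / β) * Real.log (ψ t (z - c)))
    (T : ℝ) (hT : 0 < T)
    (v : ℝ → ℝ → ℝ)
    (hv : ∀ t z : ℝ, v t z = γ / (2 * κ) * deriv (fun w => U (T - t) w) z) :
    ∀ t : ℝ, 0 ≤ t → t < T → ∀ z : ℝ, c ≤ z →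
      -(γ / (2 * κ)) ≤ v t z ∧ v t z ≤ 0 := by
  intro t ht htT z hz
  have hβpos : 0 < β := by rw [hβ]; positivity
  have hβ0 : β ≠ 0 := ne_of_gt hβpos
  have hπ : (0:ℝ) < Real.sqrt Real.pi := Real.sqrt_pos.mpr Real.pi_pos
  have hcont : Continuous fun y : ℝ => Real.exp (-y ^ 2) :=
    Real.continuous_exp.comp (continuous_pow 2).neg
  -- erf facts
  have herf_deriv : ∀ u : ℝ, HasDerivAt erf (2 / Real.sqrt Real.pi * Real.exp (-u ^ 2)) u := by
    intro u
    have he : erf = fun x => 2 / Real.sqrt Real.pi * ∫ y in (0:ℝ)..x, Real.exp (-y ^ 2) :=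
      funext herf
    rw [he]
    exact ((hcont.integral_hasStrictDerivAt 0 u).hasDerivAt).const_mul _
  have herf_nonneg : ∀ u : ℝ, 0 ≤ u → 0 ≤ erf u := by
    intro u hu
    rw [herf]
    have : 0 ≤ ∫ y in (0:ℝ)..u, Real.exp (-y ^ 2) :=
      intervalIntegral.integral_nonneg hu (fun y _ => (Real.exp_pos _).le)
    positivity
  have herf_pos : ∀ u : ℝ, 0 < u → 0 < erf u := by
    intro u hu
    rw [herf]
    have : 0 < ∫ y in (0:ℝ)..u, Real.exp (-y ^ 2) :=
      intervalIntegral.intervalIntegral_pos_of_pos (hcont.intervalIntegrable 0 u)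
        (fun y => Real.exp_pos _) hu
    positivity
  have herf_nonpos : ∀ u : ℝ, u ≤ 0 → erf u ≤ 0 := by
    intro u hu
    rw [herf]
    have h0 : 0 ≤ ∫ y in u..(0:ℝ), Real.exp (-y ^ 2) :=
      intervalIntegral.integral_nonneg hu (fun y _ => (Real.exp_pos _).le)
    have : (∫ y in (0:ℝ)..u, Real.exp (-y ^ 2)) ≤ 0 := by
      rw [intervalIntegral.integral_symm]; linarith
    have h2 : 0 ≤ 2 / Real.sqrt Real.pi := by positivity
    exact mul_nonpos_of_nonneg_of_nonpos h2 this
  have herf_le : ∀ u : ℝ, erf u ≤ 1 := by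
    intro u
    rcases le_or_gt u 0 with h | h
    · linarith [herf_nonpos u h]
    · rw [herf]
      have hI : (∫ y in (0:ℝ)..u, Real.exp (-y ^ 2)) ≤ Real.sqrt Real.pi / 2 := by
        rw [intervalIntegral.integral_of_le h.le]
        have hmono : (∫ y in Set.Ioc (0:ℝ) u, Real.exp (-y ^ 2))
            ≤ ∫ y in Set.Ioi (0:ℝ), Real.exp (-y ^ 2) := by
          apply setIntegral_mono_set
          · have := (integrable_exp_neg_mul_sq (b := 1) one_pos).integrableOn
              (s := Set.Ioi (0:ℝ))
            simpa using this
          · filter_upwards with y using (Real.exp_pos _).le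
          · exact (Set.Ioc_subset_Ioi_self).eventuallyLE
        have hval : (∫ y in Set.Ioi (0:ℝ), Real.exp (-y ^ 2)) = Real.sqrt Real.pi / 2 := by
          have := integral_gaussian_Ioi 1
          simpa using this
        linarith
      calc 2 / Real.sqrt Real.pi * ∫ y in (0:ℝ)..u, Real.exp (-y ^ 2)
          ≤ 2 / Real.sqrt Real.pi * (Real.sqrt Real.pi / 2) := by
            apply mul_le_mul_of_nonneg_left hI (by positivity)
        _ = 1 := by field_simp
  -- setup
  set τ := T - t with hτdef
  have hτ : 0 < τ := by simp only [hτdef]; linarith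
  set x := z - c with hxdef
  have hx : 0 ≤ x := by simp only [hxdef]; linarith
  set s := σ * Real.sqrt (2 * τ) with hsdef
  have hs : 0 < s := by
    have : 0 < Real.sqrt (2 * τ) := Real.sqrt_pos.mpr (by linarith)
    positivity
  set aa := β * σ * Real.sqrt τ / Real.sqrt 2 with haadef
  have haapos : 0 < aa := by
    have h1 : 0 < Real.sqrt τ := Real.sqrt_pos.mpr hτ
    have h2 : 0 < Real.sqrt 2 := Real.sqrt_pos.mpr (by norm_num)
    positivity
  set EE := Real.exp (-β * x + β ^ 2 * σ ^ 2 * τ / 2) with hEEdef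
  set N := EE * (1 - erf (x / s - aa)) with hNdef
  have hEEpos : 0 < EE := Real.exp_pos _
  have hNnn : 0 ≤ N := mul_nonneg hEEpos.le (by linarith [herf_le (x / s - aa)])
  have herfx : 0 ≤ erf (x / s) := herf_nonneg _ (div_nonneg hx hs.le)
  -- algebraic identities
  have hrτ : Real.sqrt τ ^ 2 = τ := Real.sq_sqrt hτ.le
  have hr2 : Real.sqrt 2 ^ 2 = 2 := Real.sq_sqrt (by norm_num)
  have hrτ0 : Real.sqrt τ ≠ 0 := ne_of_gt (Real.sqrt_pos.mpr hτ)
  have hr20 : Real.sqrt 2 ≠ 0 := ne_of_gt (Real.sqrt_pos.mpr (by norm_num))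
  have h2τ : Real.sqrt (2 * τ) = Real.sqrt 2 * Real.sqrt τ := Real.sqrt_mul (by norm_num) τ
  have haa2 : aa ^ 2 = β ^ 2 * σ ^ 2 * τ / 2 := by
    rw [haadef, div_pow, mul_pow, mul_pow, hrτ, hr2]
  have hcross : 2 * (x / s) * aa = β * x := by
    rw [hsdef, haadef, h2τ]
    field_simp
    linear_combination (-x) * hr2
  have hexpand : (x / s - aa) ^ 2 = (x / s) ^ 2 - β * x + β ^ 2 * σ ^ 2 * τ / 2 := by
    calc (x / s - aa) ^ 2 = (x / s) ^ 2 - 2 * (x / s) * aa + aa ^ 2 := by ring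
      _ = (x / s) ^ 2 - β * x + β ^ 2 * σ ^ 2 * τ / 2 := by rw [hcross, haa2]
  have hkey : EE * Real.exp (-(x / s - aa) ^ 2) = Real.exp (-(x / s) ^ 2) := by
    rw [hEEdef, ← Real.exp_add, hexpand]
    congr 1
    ring
  -- derivative of ψ-composite
  have h1 : HasDerivAt (fun w : ℝ => (w - c) / s) (1 / s) z := by
    have := ((hasDerivAt_id z).sub_const c).div_const s
    simpa using this
  have h1v : (z - c) / s = x / s := by rw [← hxdef]
  have h2 : HasDerivAt (fun w : ℝ => erf ((w - c) / s))
      (2 / Real.sqrt Real.pi * Real.exp (-(x / s) ^ 2) * (1 / s)) z := by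
    have h := (herf_deriv ((z - c) / s)).comp z h1
    rw [h1v] at h
    simpa [Function.comp_def] using h
  have h3 : HasDerivAt (fun w : ℝ => -β * (w - c) + β ^ 2 * σ ^ 2 * τ / 2) (-β) z := by
    have := (((hasDerivAt_id z).sub_const c).const_mul (-β)).add_const (β ^ 2 * σ ^ 2 * τ / 2)
    simpa using this
  have h4 : HasDerivAt (fun w : ℝ => Real.exp (-β * (w - c) + β ^ 2 * σ ^ 2 * τ / 2))
      (EE * (-β)) z := by
    have := h3.exp
    simpa [hEEdef, hxdef] using this
  have h5 : HasDerivAt (fun w : ℝ => (w - c) / s - aa) (1 / s) z := h1.sub_const aa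
  have h5v : (z - c) / s - aa = x / s - aa := by rw [← hxdef]
  have h6 : HasDerivAt (fun w : ℝ => erf ((w - c) / s - aa))
      (2 / Real.sqrt Real.pi * Real.exp (-(x / s - aa) ^ 2) * (1 / s)) z := by
    have h := (herf_deriv ((z - c) / s - aa)).comp z h5
    rw [h5v] at h
    simpa [Function.comp_def] using h
  have h7 : HasDerivAt (fun w : ℝ => 1 - erf ((w - c) / s - aa))
      (-(2 / Real.sqrt Real.pi * Real.exp (-(x / s - aa) ^ 2) * (1 / s))) z := h6.const_sub 1
  have h8 := h4.mul h7
  have hg : HasDerivAt (fun w : ℝ => erf ((w - c) / s) +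
      Real.exp (-β * (w - c) + β ^ 2 * σ ^ 2 * τ / 2) * (1 - erf ((w - c) / s - aa)))
      (-β * N) z := by
    have hsum := h2.add h8
    have h7v : (1 - erf ((z - c) / s - aa)) = 1 - erf (x / s - aa) := by rw [← hxdef]
    rw [h7v] at hsum
    refine HasDerivAt.congr_deriv hsum ?_
    rw [hNdef]
    have : EE * (2 / Real.sqrt Real.pi * Real.exp (-(x / s - aa) ^ 2) * (1 / s))
        = 2 / Real.sqrt Real.pi * Real.exp (-(x / s) ^ 2) * (1 / s) := by
      calc EE * (2 / Real.sqrt Real.pi * Real.exp (-(x / s - aa) ^ 2) * (1 / s))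
          = 2 / Real.sqrt Real.pi * (EE * Real.exp (-(x / s - aa) ^ 2)) * (1 / s) := by ring
        _ = _ := by rw [hkey]
    linarith [this]
  -- positivity of ψ value
  have hgz : erf ((z - c) / s) +
      Real.exp (-β * (z - c) + β ^ 2 * σ ^ 2 * τ / 2) * (1 - erf ((z - c) / s - aa))
      = erf (x / s) + N := by
    rw [hNdef, hEEdef, ← hxdef]
  have hb : (fun w : ℝ => erf ((w - c) / s) +
      Real.exp (-β * (w - c) + β ^ 2 * σ ^ 2 * τ / 2) * (1 - erf ((w - c) / s - aa))) z
      = erf (x / s) + N := hgz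
  have hP : 0 < erf (x / s) + N := by
    rcases eq_or_lt_of_le hx with hx0 | hx0
    · have hxx : x = 0 := hx0.symm
      have h1 : x / s - aa ≤ 0 := by rw [hxx]; simp; positivity
      have h2 : erf (x / s - aa) ≤ 0 := herf_nonpos _ h1
      have : 0 < N := by
        rw [hNdef]; apply mul_pos hEEpos; linarith
      linarith
    · have : 0 < erf (x / s) := herf_pos _ (div_pos hx0 hs)
      linarith
  -- compute deriv of U
  have hUg : (fun w : ℝ => U τ w) = fun w : ℝ => (1 / β) * Real.log
      (erf ((w - c) / s) + Real.exp (-β * (w - c) + β ^ 2 * σ ^ 2 * τ / 2) *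
        (1 - erf ((w - c) / s - aa))) := by
    funext w
    rw [hU, hψ, hsdef]
  have hlog : HasDerivAt (fun w : ℝ => U τ w)
      ((1 / β) * (-β * N / (erf (x / s) + N))) z := by
    rw [hUg]
    have h := (hg.log (by rw [hgz]; exact ne_of_gt hP)).const_mul (1 / β)
    first
    | rw [hb] at h
    | rw [hgz] at h
    exact h
  have hderiv : deriv (fun w : ℝ => U τ w) z = (1 / β) * (-β * N / (erf (x / s) + N)) :=
    hlog.deriv
  have hvz : v t z = -(γ / (2 * κ) * (N / (erf (x / s) + N))) := by
    rw [hv, ← hτdef, hderiv]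
    field_simp
  have hratio1 : N / (erf (x / s) + N) ≤ 1 := by
    rw [div_le_one hP]; linarith
  have hratio0 : 0 ≤ N / (erf (x / s) + N) := div_nonneg hNnn hP.le
  have hc : 0 < γ / (2 * κ) := by positivity
  constructor
  · rw [hvz]
    have : γ / (2 * κ) * (N / (erf (x / s) + N)) ≤ γ / (2 * κ) * 1 :=
      mul_le_mul_of_nonneg_left hratio1 hc.le
    simp at this ⊢
    linarith
  · rw [hvz]
    have : 0 ≤ γ / (2 * κ) * (N / (erf (x / s) + N)) := mul_nonneg hc.le hratio0
    linarith
end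

section
/- For every t > 0 and every x ∈ ℝ one has ∂_t ψ(t,x) ≥ 0. Consequently, for every fixed z ≥ c the map t ↦ U(t,z) = (1/β)·log ψ(t, z−c) is nondecreasing on (0,∞). -/
open Real MeasureTheory intervalIntegral

noncomputable def myErf (x : ℝ) : ℝ := (2 / Real.sqrt Real.pi) * ∫ y in (0:ℝ)..x, Real.exp (-y ^ 2)

lemma cont_g : Continuous (fun y : ℝ => Real.exp (-y ^ 2)) := by continuity

lemma hasDerivAt_myErf (y : ℝ) :
    HasDerivAt myErf (2 / Real.sqrt Real.pi * Real.exp (-y ^ 2)) y := by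
  have h := intervalIntegral.integral_hasDerivAt_right
    (cont_g.intervalIntegrable 0 y)
    (cont_g.stronglyMeasurableAtFilter _ _)
    cont_g.continuousAt
  exact h.const_mul (2 / Real.sqrt Real.pi)

lemma myErf_lt_one (y : ℝ) : myErf y < 1 := by
  have hpi : (0:ℝ) < Real.sqrt Real.pi := Real.sqrt_pos.2 Real.pi_pos
  have key : (∫ t in (0:ℝ)..y, Real.exp (-t ^ 2)) < Real.sqrt Real.pi / 2 := by
    have hIoi : (∫ t in Set.Ioi (0:ℝ), Real.exp (-(1:ℝ) * t ^ 2)) = Real.sqrt (Real.pi / 1) / 2 :=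
      integral_gaussian_Ioi 1
    have hIoi' : (∫ t in Set.Ioi (0:ℝ), Real.exp (-t ^ 2)) = Real.sqrt Real.pi / 2 := by
      simpa using hIoi
    rcases le_or_gt y 0 with hy | hy
    · have : (∫ t in (0:ℝ)..y, Real.exp (-t ^ 2)) ≤ 0 := by
        rw [intervalIntegral.integral_symm]
        simp only [neg_nonpos]
        apply intervalIntegral.integral_nonneg hy
        intro t _; positivity
      calc (∫ t in (0:ℝ)..y, Real.exp (-t ^ 2)) ≤ 0 := this
        _ < Real.sqrt Real.pi / 2 := by positivity
    · have hint : IntegrableOn (fun t : ℝ => Real.exp (-t ^ 2)) (Set.Ioi 0) := by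
        have := integrable_exp_neg_mul_sq (by norm_num : (0:ℝ) < 1)
        simpa using this.integrableOn
      have hsplit : (∫ t in Set.Ioi (0:ℝ), Real.exp (-t ^ 2)) =
          (∫ t in Set.Ioc (0:ℝ) y, Real.exp (-t ^ 2)) + ∫ t in Set.Ioi y, Real.exp (-t ^ 2) := by
        rw [← MeasureTheory.setIntegral_union (Set.Ioc_disjoint_Ioi le_rfl)
          measurableSet_Ioi (hint.mono_set Set.Ioc_subset_Ioi_self) (hint.mono_set (Set.Ioi_subset_Ioi hy.le))]
        rw [Set.Ioc_union_Ioi_eq_Ioi hy.le]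
      have hpos : (0:ℝ) < ∫ t in Set.Ioi y, Real.exp (-t ^ 2) := by
        apply MeasureTheory.setIntegral_pos_iff_support_of_nonneg_ae ?_ (hint.mono_set (Set.Ioi_subset_Ioi hy.le)) |>.2
        · have : Function.support (fun t : ℝ => Real.exp (-t ^ 2)) = Set.univ := by
            ext t; simp [Real.exp_ne_zero]
          rw [this]
          simp [Set.inter_univ]
        · filter_upwards with t using by positivity
      have heq : (∫ t in (0:ℝ)..y, Real.exp (-t ^ 2)) = ∫ t in Set.Ioc (0:ℝ) y, Real.exp (-t ^ 2) := by
        rw [intervalIntegral.integral_of_le hy.le]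
      rw [heq]
      rw [← hIoi', hsplit]
      linarith
  have : myErf y = (2 / Real.sqrt Real.pi) * ∫ t in (0:ℝ)..y, Real.exp (-t ^ 2) := rfl
  rw [this]
  calc (2 / Real.sqrt Real.pi) * ∫ t in (0:ℝ)..y, Real.exp (-t ^ 2)
      < (2 / Real.sqrt Real.pi) * (Real.sqrt Real.pi / 2) := by
        apply mul_lt_mul_of_pos_left key (by positivity)
    _ = 1 := by field_simp

lemma myErf_nonneg {y : ℝ} (hy : 0 ≤ y) : 0 ≤ myErf y := by
  unfold myErf
  apply mul_nonneg (by positivity)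
  apply intervalIntegral.integral_nonneg hy
  intro t _; positivity
noncomputable def Psi (σ β t x : ℝ) : ℝ :=
  myErf (x / (σ * Real.sqrt (2 * t))) +
    Real.exp (-β * x + β ^ 2 * σ ^ 2 * t / 2) *
      (1 - myErf (x / (σ * Real.sqrt (2 * t)) - β * σ * Real.sqrt t / Real.sqrt 2))

lemma psi_hasDeriv (σ β x t : ℝ) (hσ : 0 < σ) (hb : 0 ≤ β) (ht : 0 < t) :
    ∃ D, HasDerivAt (fun s => Psi σ β s x) D t ∧ 0 ≤ D := by
  have h2t : 0 < 2 * t := by linarith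
  have hst : 0 < Real.sqrt (2 * t) := Real.sqrt_pos.2 h2t
  have hr : 0 < Real.sqrt t := Real.sqrt_pos.2 ht
  have hq : 0 < Real.sqrt 2 := by positivity
  set st := Real.sqrt (2 * t) with hst_def
  set r := Real.sqrt t with hr_def
  have hst2 : st ^ 2 = 2 * t := Real.sq_sqrt h2t.le
  have hr2 : r ^ 2 = t := Real.sq_sqrt ht.le
  have hq2 : Real.sqrt 2 ^ 2 = 2 := Real.sq_sqrt (by norm_num)
  have hstq : st = Real.sqrt 2 * r := Real.sqrt_mul (by norm_num) t
  -- derivative of s ↦ sqrt (2*s)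
  have h1 : HasDerivAt (fun s : ℝ => Real.sqrt (2 * s)) (1 / (2 * st) * 2) t := by
    have h0 : HasDerivAt (fun s : ℝ => 2 * s) 2 t := by
      simpa using (hasDerivAt_id t).const_mul 2
    exact (Real.hasDerivAt_sqrt (ne_of_gt h2t)).comp t h0
  -- u(s) = x / (σ * sqrt (2 s))
  have hu : HasDerivAt (fun s : ℝ => x / (σ * Real.sqrt (2 * s)))
      (-x / (σ * st * st ^ 2)) t := by
    have hden : HasDerivAt (fun s : ℝ => σ * Real.sqrt (2 * s)) (σ * (1 / (2 * st) * 2)) t :=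
      h1.const_mul σ
    have h := (hasDerivAt_const t x).div hden (by positivity)
    refine h.congr_deriv ?_
    field_simp
    linear_combination (-x*(st + Real.sqrt (2*t))) * hst_def
  -- a(s) = β σ sqrt s / sqrt 2
  have ha : HasDerivAt (fun s : ℝ => β * σ * Real.sqrt s / Real.sqrt 2)
      (β * σ * (1 / (2 * r)) / Real.sqrt 2) t :=
    ((Real.hasDerivAt_sqrt (ne_of_gt ht)).const_mul (β * σ)).div_const _
  -- exponent
  have he : HasDerivAt (fun s : ℝ => -β * x + β ^ 2 * σ ^ 2 * s / 2) (β ^ 2 * σ ^ 2 / 2) t := by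
    have := ((((hasDerivAt_id t).const_mul (β ^ 2 * σ ^ 2)).div_const 2).const_add (-β * x))
    simpa using this
  set u : ℝ := x / (σ * st) with hu_def
  set a : ℝ := β * σ * r / Real.sqrt 2 with ha_def
  set E : ℝ := Real.exp (-β * x + β ^ 2 * σ ^ 2 * t / 2) with hE_def
  set u' : ℝ := -x / (σ * st * st ^ 2) with hu'_def
  set a' : ℝ := β * σ * (1 / (2 * r)) / Real.sqrt 2 with ha'_def
  have hv : HasDerivAt (fun s : ℝ =>
      x / (σ * Real.sqrt (2 * s)) - β * σ * Real.sqrt s / Real.sqrt 2) (u' - a') t := hu.sub ha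
  have hErfU : HasDerivAt (fun s : ℝ => myErf (x / (σ * Real.sqrt (2 * s))))
      (2 / Real.sqrt Real.pi * Real.exp (-u ^ 2) * u') t := by
    have := (hasDerivAt_myErf u).comp t hu
    exact this
  have hErfV : HasDerivAt (fun s : ℝ =>
      1 - myErf (x / (σ * Real.sqrt (2 * s)) - β * σ * Real.sqrt s / Real.sqrt 2))
      (-(2 / Real.sqrt Real.pi * Real.exp (-(u - a) ^ 2) * (u' - a'))) t := by
    have := ((hasDerivAt_myErf (u - a)).comp t hv).const_sub 1
    simpa [Function.comp] using this
  have hExp : HasDerivAt (fun s : ℝ => Real.exp (-β * x + β ^ 2 * σ ^ 2 * s / 2))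
      (E * (β ^ 2 * σ ^ 2 / 2)) t := he.exp
  have htot : HasDerivAt (fun s => Psi σ β s x)
      (2 / Real.sqrt Real.pi * Real.exp (-u ^ 2) * u' +
        (E * (β ^ 2 * σ ^ 2 / 2) * (1 - myErf (u - a)) +
          E * -(2 / Real.sqrt Real.pi * Real.exp (-(u - a) ^ 2) * (u' - a')))) t := by
    unfold Psi
    exact hErfU.add (hExp.mul hErfV)
  refine ⟨_, htot, ?_⟩
  have key : E * Real.exp (-(u - a) ^ 2) = Real.exp (-u ^ 2) := by
    rw [hE_def, ← Real.exp_add]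
    congr 1
    have expand : -β * x + β ^ 2 * σ ^ 2 * t / 2 + -(u - a) ^ 2 =
        -u ^ 2 + (2 * u * a - β * x) + (β ^ 2 * σ ^ 2 * t / 2 - a ^ 2) := by ring
    have h2ua : 2 * u * a = β * x := by
      rw [hu_def, ha_def, hstq]
      field_simp
      linear_combination (-(x*β))*hq2
    have ha2 : a ^ 2 = β ^ 2 * σ ^ 2 * t / 2 := by
      rw [ha_def]
      field_simp
      linear_combination (2*β^2)*hr2 - (β^2*t)*hq2
    rw [expand, h2ua, ha2]
    ring
  have hrw : 2 / Real.sqrt Real.pi * Real.exp (-u ^ 2) * u' +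
        (E * (β ^ 2 * σ ^ 2 / 2) * (1 - myErf (u - a)) +
          E * -(2 / Real.sqrt Real.pi * Real.exp (-(u - a) ^ 2) * (u' - a'))) =
      2 / Real.sqrt Real.pi * Real.exp (-u ^ 2) * a' +
        E * (β ^ 2 * σ ^ 2 / 2) * (1 - myErf (u - a)) := by
    have : E * -(2 / Real.sqrt Real.pi * Real.exp (-(u - a) ^ 2) * (u' - a')) =
        -(2 / Real.sqrt Real.pi * (E * Real.exp (-(u - a) ^ 2)) * (u' - a')) := by ring
    rw [this, key]
    ring
  rw [hrw]
  have h1 : 0 ≤ 2 / Real.sqrt Real.pi * Real.exp (-u ^ 2) * a' := by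
    apply mul_nonneg (by positivity)
    rw [ha'_def]; positivity
  have h2 : 0 ≤ E * (β ^ 2 * σ ^ 2 / 2) * (1 - myErf (u - a)) := by
    apply mul_nonneg (by positivity)
    linarith [myErf_lt_one (u - a)]
  linarith

lemma psi_pos (σ β x t : ℝ) (hσ : 0 < σ) (ht : 0 < t) (hx : 0 ≤ x) : 0 < Psi σ β t x := by
  unfold Psi
  have hst : 0 < Real.sqrt (2 * t) := Real.sqrt_pos.2 (by linarith)
  have h1 : 0 ≤ myErf (x / (σ * Real.sqrt (2 * t))) := myErf_nonneg (by positivity)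
  have h2 : 0 < 1 - myErf (x / (σ * Real.sqrt (2 * t)) - β * σ * Real.sqrt t / Real.sqrt 2) := by
    linarith [myErf_lt_one (x / (σ * Real.sqrt (2 * t)) - β * σ * Real.sqrt t / Real.sqrt 2)]
  have h3 : (0:ℝ) < Real.exp (-β * x + β ^ 2 * σ ^ 2 * t / 2) := Real.exp_pos _
  have := mul_pos h3 h2
  linarith

/-- For every t > 0 and every x ∈ ℝ one has ∂_t ψ(t,x) ≥ 0.
Consequently, for every fixed z ≥ c the map t ↦ U(t,z) = (1/β)·log ψ(t, z−c) is
nondecreasing on (0,∞). -/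
theorem psi_time_monotone
    (σ γ κ c : ℝ) (hσ : 0 < σ) (hγ : 0 < γ) (hκ : 0 < κ)
    (β : ℝ) (hβ : β = γ ^ 2 / (2 * κ * σ ^ 2))
    (erf : ℝ → ℝ)
    (herf : ∀ x : ℝ, erf x = (2 / Real.sqrt Real.pi) * ∫ y in (0:ℝ)..x, Real.exp (-y ^ 2))
    (ψ : ℝ → ℝ → ℝ)
    (hψ : ∀ t x : ℝ, ψ t x =
      erf (x / (σ * Real.sqrt (2 * t))) +
        Real.exp (-β * x + β ^ 2 * σ ^ 2 * t / 2) *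
          (1 - erf (x / (σ * Real.sqrt (2 * t)) - β * σ * Real.sqrt t / Real.sqrt 2))) :
    (∀ t : ℝ, 0 < t → ∀ x : ℝ, 0 ≤ deriv (fun s => ψ s x) t) ∧
      (∀ z : ℝ, c ≤ z →
        MonotoneOn (fun t => (1 / β) * Real.log (ψ t (z - c))) (Set.Ioi 0)) := by
  have hβpos : 0 < β := by rw [hβ]; positivity
  have herf' : erf = myErf := funext herf
  subst herf'
  have hψ' : ψ = Psi σ β := by
    funext t x; rw [hψ]; rfl
  subst hψ'
  constructor
  · intro t ht x
    obtain ⟨D, hD, hD0⟩ := psi_hasDeriv σ β x t hσ hβpos.le ht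
    rw [hD.deriv]
    exact hD0
  · intro z hz
    set x := z - c with hx_def
    have hx : 0 ≤ x := by simp [hx_def]; linarith
    have hmono : MonotoneOn (fun t => Psi σ β t x) (Set.Ioi 0) := by
      apply monotoneOn_of_deriv_nonneg (convex_Ioi 0)
      · intro t ht
        obtain ⟨D, hD, _⟩ := psi_hasDeriv σ β x t hσ hβpos.le ht
        exact hD.continuousAt.continuousWithinAt
      · rw [interior_Ioi]
        intro t ht
        obtain ⟨D, hD, _⟩ := psi_hasDeriv σ β x t hσ hβpos.le ht
        exact hD.differentiableAt.differentiableWithinAt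
      · rw [interior_Ioi]
        intro t ht
        obtain ⟨D, hD, hD0⟩ := psi_hasDeriv σ β x t hσ hβpos.le ht
        rw [hD.deriv]
        exact hD0
    intro s hs t ht hst
    have h1 : Psi σ β s x ≤ Psi σ β t x := hmono hs ht hst
    have h2 : 0 < Psi σ β s x := psi_pos σ β x s hσ hs hx
    have := Real.log_le_log h2 h1
    have hβinv : (0:ℝ) ≤ 1 / β := by positivity
    exact mul_le_mul_of_nonneg_left this hβinv
end
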